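/- arXiv:2404.13540 — 6 statements merged into one kernel-verified Lean document; each statement's English description precedes it below -/
import Mathlib

section
/- Let a_1,...,a_k ∈ S^{n-1} span a (k-1)-dimensional affine plane, P the parallel linear (k-1)-subspace, and c = inf{f(w) : w ∈ P, 1/2 ≤ ‖w‖ ≤ 1} > 0 where f(w) = sup_i ⟨w, π_P(a_i)⟩ − inf_i ⟨w, π_P(a_i)⟩. Then for every 0 < r < 1/2 and every nonzero v in the cone P_r = {v : dist(v, P) < r‖v‖}, one has sup_{1≤i≤k} cos∠(v, 0, a_i) − inf_{1≤i≤k} cos∠(v, 0, a_i) > c, where cos∠(v,0,a_i) = ⟨v, a_i⟩/‖v‖. -/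
open RealInnerProductSpace

lemma supinf_shift {k : ℕ} [Nonempty (Fin k)] (g : Fin k → ℝ) (C : ℝ) :
    (⨆ i, (g i + C)) - (⨅ i, (g i + C)) = (⨆ i, g i) - (⨅ i, g i) := by
  have h1 : (⨆ i, (g i + C)) = (⨆ i, g i) + C := by
    rw [← Finset.sup'_univ_eq_ciSup, ← Finset.sup'_univ_eq_ciSup (f := g), Finset.sup'_add]
  have h2 : (⨅ i, (g i + C)) = (⨅ i, g i) + C := by
    rw [← Finset.inf'_univ_eq_ciInf, ← Finset.inf'_univ_eq_ciInf (f := g)]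
    exact (map_finset_inf' (OrderIso.addRight C) Finset.univ_nonempty g).symm
  rw [h1, h2]; ring

lemma supinf_smul {k : ℕ} [Nonempty (Fin k)] (g : Fin k → ℝ) {t : ℝ} (ht : 0 ≤ t) :
    (⨆ i, t * g i) - (⨅ i, t * g i) = t * ((⨆ i, g i) - (⨅ i, g i)) := by
  have h1 : (⨆ i, t * g i) = t * ⨆ i, g i := by
    simpa [smul_eq_mul] using (Real.smul_iSup_of_nonneg ht g).symm
  have h2 : (⨅ i, t * g i) = t * ⨅ i, g i := by
    simpa [smul_eq_mul] using (Real.smul_iInf_of_nonneg ht g).symm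
  rw [h1, h2]; ring


lemma norm_bounds_aux {nv np nq r : ℝ} (hv : 0 < nv) (hp : 0 ≤ np) (hq : 0 ≤ nq)
    (hpyth : nv^2 = np^2 + nq^2) (h : nq < r * nv) (hr : r < 1/2) :
    np ≤ nv ∧ nv / 2 < np := by
  constructor
  · nlinarith
  · have h1 : nq < nv / 2 := by nlinarith
    nlinarith

set_option maxHeartbeats 1000000 in
theorem stmt2 (n k : ℕ) (hn : 1 ≤ n) (hk2 : 2 ≤ k) (hkn : k ≤ n + 1)
    (a : Fin k → EuclideanSpace ℝ (Fin n))
    (ha : ∀ i, ‖a i‖ = 1)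
    (hgeneric : AffineIndependent ℝ a)
    (P : Submodule ℝ (EuclideanSpace ℝ (Fin n)))
    (hP : P = vectorSpan ℝ (Set.range a))
    (f : EuclideanSpace ℝ (Fin n) → ℝ)
    (hf : ∀ w, f w = (⨆ i, ⟪w, (Submodule.orthogonalProjectionOnto P (a i) : EuclideanSpace ℝ (Fin n))⟫)
        - (⨅ i, ⟪w, (Submodule.orthogonalProjectionOnto P (a i) : EuclideanSpace ℝ (Fin n))⟫))
    (c : ℝ)
    (hc : c = sInf (f '' {w : EuclideanSpace ℝ (Fin n) | w ∈ P ∧ 1 / 2 ≤ ‖w‖ ∧ ‖w‖ ≤ 1})) :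
    ∀ r : ℝ, 0 < r → r < 1 / 2 →
      ∀ v : EuclideanSpace ℝ (Fin n), v ≠ 0 →
        Metric.infDist v (P : Set (EuclideanSpace ℝ (Fin n))) < r * ‖v‖ →
        (⨆ i, ⟪v, a i⟫ / ‖v‖) - (⨅ i, ⟪v, a i⟫ / ‖v‖) > c := by
  intro r hr hr2 v hv hdist
  haveI : Nonempty (Fin k) := ⟨⟨0, by omega⟩⟩
  -- basic objects
  set b : Fin k → EuclideanSpace ℝ (Fin n) :=
    fun i => (Submodule.orthogonalProjectionOnto P (a i) : EuclideanSpace ℝ (Fin n)) with hb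
  have hbP : ∀ i, b i ∈ P := fun i => (Submodule.orthogonalProjectionOnto P (a i)).2
  have horth : ∀ i, a i - b i ∈ Pᗮ := fun i => P.sub_starProjection_mem_orthogonal (a i)
  have hmemP : ∀ i j, a i - a j ∈ P := by
    intro i j
    rw [hP]
    have h := vsub_mem_vectorSpan ℝ (Set.mem_range_self (f := a) i)
      (Set.mem_range_self (f := a) j)
    simpa using h
  have hsub : ∀ i j, b i - b j = a i - a j := by
    intro i j
    have h1 : (Submodule.orthogonalProjectionOnto P (a i - a j) : EuclideanSpace ℝ (Fin n)) = a i - a j :=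
      Submodule.starProjection_eq_self_iff.mpr (hmemP i j)
    rw [← h1, map_sub]
    simp [hb]
  set S := {w : EuclideanSpace ℝ (Fin n) | w ∈ P ∧ 1 / 2 ≤ ‖w‖ ∧ ‖w‖ ≤ 1} with hS
  -- f is nonnegative
  have hf0 : ∀ w, 0 ≤ f w := by
    intro w
    rw [hf]
    have h1 : (⨅ i, ⟪w, b i⟫) ≤ ⟪w, b (Classical.arbitrary (Fin k))⟫ :=
      ciInf_le (Finite.bddBelow_range _) _
    have h2 : ⟪w, b (Classical.arbitrary (Fin k))⟫ ≤ ⨆ i, ⟪w, b i⟫ :=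
      le_ciSup (f := fun i => ⟪w, b i⟫) (Finite.bddAbove_range _) _
    linarith
  -- f is continuous
  have hfc : Continuous f := by
    have hfe : f = fun w => (Finset.univ.sup' Finset.univ_nonempty fun i => ⟪w, b i⟫)
        - (Finset.univ.inf' Finset.univ_nonempty fun i => ⟪w, b i⟫) := by
      funext w
      rw [hf, ← Finset.sup'_univ_eq_ciSup, ← Finset.inf'_univ_eq_ciInf]
    rw [hfe]
    apply Continuous.sub
    · rw [continuous_iff_continuousAt]
      intro x
      exact Filter.Tendsto.finset_sup'_nhds_apply _
        (fun i _ => ((continuous_id.inner continuous_const).tendsto x))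
    · rw [continuous_iff_continuousAt]
      intro x
      exact Filter.Tendsto.finset_inf'_nhds_apply _
        (fun i _ => ((continuous_id.inner continuous_const).tendsto x))
  -- S is compact
  have hScompact : IsCompact S := by
    have hclosed : IsClosed S := by
      have hSeq : S = (P : Set (EuclideanSpace ℝ (Fin n))) ∩
          (norm ⁻¹' Set.Icc (1/2 : ℝ) 1) := by
        ext w; simp [hS, Set.mem_Icc, and_assoc]
      rw [hSeq]
      exact (Submodule.closed_of_finiteDimensional P).inter
        (isClosed_Icc.preimage continuous_norm)
    have hbdd : Bornology.IsBounded S := by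
      apply (Metric.isBounded_closedBall (x := (0 : EuclideanSpace ℝ (Fin n))) (r := 1)).subset
      intro w hw
      simpa [Metric.mem_closedBall, dist_eq_norm] using hw.2.2
    exact Metric.isCompact_of_isClosed_isBounded hclosed hbdd
  -- S is nonempty
  have hSne : S.Nonempty := by
    have hij : (⟨0, by omega⟩ : Fin k) ≠ ⟨1, by omega⟩ := by
      intro h; simpa using congrArg Fin.val h
    have hane : a ⟨0, by omega⟩ ≠ a ⟨1, by omega⟩ := fun h => hij (hgeneric.injective h)
    have hdne : a ⟨0, by omega⟩ - a ⟨1, by omega⟩ ≠ 0 := sub_ne_zero.mpr hane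
    have hdnorm : (0 : ℝ) < ‖a ⟨0, by omega⟩ - a ⟨1, by omega⟩‖ := norm_pos_iff.mpr hdne
    refine ⟨(‖a ⟨0, by omega⟩ - a ⟨1, by omega⟩‖⁻¹ * (1/2)) • (a ⟨0, by omega⟩ - a ⟨1, by omega⟩),
      P.smul_mem _ (hmemP _ _), ?_⟩
    have hn12 : ‖(‖a ⟨0, by omega⟩ - a ⟨1, by omega⟩‖⁻¹ * (1/2)) •
        (a ⟨0, by omega⟩ - a ⟨1, by omega⟩)‖ = 1/2 := by
      rw [norm_smul, Real.norm_eq_abs, abs_of_nonneg (by positivity), mul_comm _ (1/2 : ℝ),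
        mul_assoc, inv_mul_cancel₀ hdnorm.ne', mul_one]
    rw [hn12]
    norm_num
  -- f is positive on S
  have hfpos : ∀ w ∈ S, 0 < f w := by
    intro w hw
    rcases (hf0 w).lt_or_eq with h | h
    · exact h
    exfalso
    have hwne : w ≠ 0 := by
      intro h0
      have h12 := hw.2.1
      rw [h0] at h12
      simp at h12
      linarith
    have hsupinf : (⨆ j, ⟪w, b j⟫) = ⨅ j, ⟪w, b j⟫ := by
      have h4 := hf w
      rw [← h] at h4
      linarith [sub_eq_zero.mp h4.symm]
    have hall : ∀ i, ⟪w, b i⟫ = ⨅ j, ⟪w, b j⟫ := by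
      intro i
      have h1 : (⨅ j, ⟪w, b j⟫) ≤ ⟪w, b i⟫ := ciInf_le (Finite.bddBelow_range _) _
      have h2 : ⟪w, b i⟫ ≤ ⨆ j, ⟪w, b j⟫ :=
        le_ciSup (f := fun j => ⟪w, b j⟫) (Finite.bddAbove_range _) _
      rw [hsupinf] at h2
      linarith
    have hzero : ∀ i j, ⟪w, a i - a j⟫ = (0:ℝ) := by
      intro i j
      rw [← hsub i j, inner_sub_right, hall i, hall j, sub_self]
    have hwinner : ∀ u, u ∈ Submodule.span ℝ (Set.range a -ᵥ Set.range a) →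
        ⟪w, u⟫ = (0:ℝ) := by
      intro u hu
      induction hu using Submodule.span_induction with
      | mem u hu =>
          obtain ⟨x, ⟨i, rfl⟩, y, ⟨j, rfl⟩, rfl⟩ := hu
          exact hzero i j
      | zero => simp
      | add u₁ u₂ _ _ h1 h2 => rw [inner_add_right, h1, h2, add_zero]
      | smul t u _ h1 => rw [real_inner_smul_right, h1, mul_zero]
    have hwP : w ∈ Submodule.span ℝ (Set.range a -ᵥ Set.range a) := by
      have := hw.1
      rwa [hP, vectorSpan_def] at this
    exact hwne (inner_self_eq_zero.mp (hwinner w hwP))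
  -- the infimum c is positive and is a lower bound
  have hbddS : BddBelow (f '' S) := ⟨0, by rintro x ⟨w, hw, rfl⟩; exact hf0 w⟩
  have hcpos : 0 < c := by
    obtain ⟨w₀, hw₀, hmin⟩ := hScompact.exists_isMinOn hSne hfc.continuousOn
    have hle : f w₀ ≤ c := by
      rw [hc]
      exact le_csInf (hSne.image f) (by rintro x ⟨w, hw, rfl⟩; exact hmin hw)
    linarith [hfpos w₀ hw₀]
  -- decomposition of v
  set p : EuclideanSpace ℝ (Fin n) := (Submodule.orthogonalProjectionOnto P v : EuclideanSpace ℝ (Fin n))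
    with hp
  have hpP : p ∈ P := (Submodule.orthogonalProjectionOnto P v).2
  have hqo : v - p ∈ Pᗮ := P.sub_starProjection_mem_orthogonal v
  have hvpos : (0:ℝ) < ‖v‖ := norm_pos_iff.mpr hv
  have hdist_eq : Metric.infDist v (P : Set (EuclideanSpace ℝ (Fin n))) = ‖v - p‖ := by
    rw [Metric.infDist_eq_iInf]
    simp_rw [dist_eq_norm]
    exact (Submodule.starProjection_minimal v).symm
  have hq : ‖v - p‖ < r * ‖v‖ := hdist_eq ▸ hdist
  have hinner0 : ⟪p, v - p⟫ = (0:ℝ) := Submodule.inner_right_of_mem_orthogonal hpP hqo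
  have hpyth : ‖v‖^2 = ‖p‖^2 + ‖v - p‖^2 := by
    have hsum : p + (v - p) = v := by abel
    have hns := norm_add_sq_real p (v - p)
    rw [hsum] at hns
    rw [hns, hinner0]; ring
  have hbounds := norm_bounds_aux hvpos (norm_nonneg p) (norm_nonneg (v - p)) hpyth hq hr2
  have hple : ‖p‖ ≤ ‖v‖ := hbounds.1
  have hpgt : ‖v‖ / 2 < ‖p‖ := hbounds.2
  -- normalized projection
  set w : EuclideanSpace ℝ (Fin n) := ‖v‖⁻¹ • p with hw
  have hwP : w ∈ P := P.smul_mem _ hpP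
  have hwnorm : ‖w‖ = ‖p‖ / ‖v‖ := by
    rw [hw, norm_smul, Real.norm_eq_abs, abs_of_nonneg (by positivity)]
    field_simp
  have hw_half : 1/2 < ‖w‖ := by
    rw [hwnorm, lt_div_iff₀ hvpos]
    linarith
  have hw_le : ‖w‖ ≤ 1 := by
    rw [hwnorm, div_le_one hvpos]
    exact hple
  -- key identity
  set i₀ : Fin k := Classical.arbitrary (Fin k) with hi₀
  set C : ℝ := ⟪v - p, a i₀ - b i₀⟫ with hC
  have hkey : ∀ i, ⟪v, a i⟫ / ‖v‖ = ⟪w, b i⟫ + C / ‖v‖ := by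
    intro i
    have hconst : a i - b i = a i₀ - b i₀ := by
      rw [sub_eq_sub_iff_sub_eq_sub]
      exact (hsub i i₀).symm
    have hdecomp : ⟪v, a i⟫ = ⟪p, b i⟫ + C := by
      have hv_eq : v = p + (v - p) := by abel
      have ha_eq : a i = b i + (a i - b i) := by abel
      calc ⟪v, a i⟫ = ⟪p + (v - p), b i + (a i - b i)⟫ := by rw [← hv_eq, ← ha_eq]
        _ = ⟪p, b i⟫ + ⟪p, a i - b i⟫ + (⟪v - p, b i⟫ + ⟪v - p, a i - b i⟫) := by
            rw [inner_add_left, inner_add_right, inner_add_right]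
        _ = ⟪p, b i⟫ + C := by
            rw [Submodule.inner_right_of_mem_orthogonal hpP (horth i),
              Submodule.inner_left_of_mem_orthogonal (hbP i) hqo, hconst, ← hC]
            ring
    have hws : ⟪w, b i⟫ = ‖v‖⁻¹ * ⟪p, b i⟫ := by
      rw [hw, real_inner_smul_left]
    rw [hdecomp, hws]
    field_simp
  -- rewrite the goal
  have hgoal_eq : (⨆ i, ⟪v, a i⟫ / ‖v‖) - (⨅ i, ⟪v, a i⟫ / ‖v‖) = f w := by
    have e1 : (fun i => ⟪v, a i⟫ / ‖v‖) = fun i => ⟪w, b i⟫ + C / ‖v‖ := funext hkey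
    calc (⨆ i, ⟪v, a i⟫ / ‖v‖) - (⨅ i, ⟪v, a i⟫ / ‖v‖)
        = (⨆ i, (⟪w, b i⟫ + C / ‖v‖)) - (⨅ i, (⟪w, b i⟫ + C / ‖v‖)) := by rw [e1]
      _ = (⨆ i, ⟪w, b i⟫) - (⨅ i, ⟪w, b i⟫) := supinf_shift _ _
      _ = f w := (hf w).symm
  rw [hgoal_eq]
  -- scaling argument
  have htpos : (0:ℝ) < ‖w‖ := by linarith
  set u : EuclideanSpace ℝ (Fin n) := (2 * ‖w‖)⁻¹ • w with hu
  have huP : u ∈ P := P.smul_mem _ hwP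
  have hunorm : ‖u‖ = 1/2 := by
    rw [hu, norm_smul, Real.norm_eq_abs, abs_of_nonneg (by positivity)]
    rw [mul_inv, mul_assoc, inv_mul_cancel₀ htpos.ne']
    norm_num
  have huS : u ∈ S := ⟨huP, by rw [hunorm], by rw [hunorm]; norm_num⟩
  have hwu : w = (2 * ‖w‖) • u := by
    rw [hu, smul_smul, mul_inv_cancel₀ (by positivity), one_smul]
  have hfwu : f w = (2 * ‖w‖) * f u := by
    rw [hf w, hf u]
    have e2 : (fun i => ⟪w, b i⟫) = fun i => (2 * ‖w‖) * ⟪u, b i⟫ := by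
      funext i
      conv_lhs => rw [hwu]
      rw [real_inner_smul_left]
    rw [e2]
    exact supinf_smul _ (by positivity)
  have hcu : c ≤ f u := by
    rw [hc]
    exact csInf_le hbddS ⟨u, huS, rfl⟩
  rw [hfwu]
  have h2t : 1 < 2 * ‖w‖ := by linarith
  nlinarith
end

section
/- Let E ⊂ ℝ^n be a nonempty closed set, d(x) = dist(x,E), and suppose x ∈ ℝ^n, v ∈ ℝ^n, y_1 is a unit vector with x + d(x)·y_1 ∈ E, and z is a unit vector. Set q = x + v + d(x+v)·z. Then ‖q − x‖² ≤ d(x)² + 2‖v‖ d(x) [⟨v/‖v‖, z⟩ − ⟨v/‖v‖, y_1⟩] + 4‖v‖² whenever v ≠ 0. -/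
open RealInnerProductSpace

theorem stmt6 (n : ℕ) (E : Set (EuclideanSpace ℝ (Fin n)))
    (hEne : E.Nonempty) (hEcl : IsClosed E)
    (x v y₁ z : EuclideanSpace ℝ (Fin n))
    (hv : v ≠ 0) (hy₁ : ‖y₁‖ = 1) (hz : ‖z‖ = 1)
    (hnear : x + (Metric.infDist x E) • y₁ ∈ E)
    (q : EuclideanSpace ℝ (Fin n))
    (hq : q = x + v + (Metric.infDist (x + v) E) • z) :
    ‖q - x‖ ^ 2 ≤ (Metric.infDist x E) ^ 2
      + 2 * ‖v‖ * Metric.infDist x E * (⟪‖v‖⁻¹ • v, z⟫ - ⟪‖v‖⁻¹ • v, y₁⟫)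
      + 4 * ‖v‖ ^ 2 := by
  set d := Metric.infDist x E with hd
  set d' := Metric.infDist (x + v) E with hd'
  have hvne : ‖v‖ ≠ 0 := norm_ne_zero_iff.mpr hv
  have hvpos : (0:ℝ) < ‖v‖ := norm_pos_iff.mpr hv
  have hd0 : 0 ≤ d := Metric.infDist_nonneg
  have hd'0 : 0 ≤ d' := Metric.infDist_nonneg
  -- Lipschitz
  have hlip : d' ≤ d + ‖v‖ := by
    calc d' ≤ d + dist (x + v) x := Metric.infDist_le_infDist_add_dist
    _ = d + ‖v‖ := by rw [dist_eq_norm, add_sub_cancel_left]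
  -- distance to p
  have hdp : d' ≤ ‖v - d • y₁‖ := by
    have := Metric.infDist_le_dist_of_mem (x := x + v) hnear
    rw [dist_eq_norm] at this
    convert this using 2
    case e'_2 => rfl
    case e'_3 => abel
  have hdp2 : d' ^ 2 ≤ ‖v‖ ^ 2 - 2 * d * ⟪v, y₁⟫ + d ^ 2 := by
    have h2 : ‖v - d • y₁‖ ^ 2 = ‖v‖ ^ 2 - 2 * (d * ⟪v, y₁⟫) + d ^ 2 := by
      rw [norm_sub_sq_real, real_inner_smul_right, norm_smul, Real.norm_eq_abs,
        abs_of_nonneg hd0, hy₁]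
      ring
    nlinarith [norm_nonneg (v - d • y₁)]
  -- expand q - x
  have hqx : ‖q - x‖ ^ 2 = ‖v‖ ^ 2 + 2 * (d' * ⟪v, z⟫) + d' ^ 2 := by
    have : q - x = v + d' • z := by rw [hq]; abel
    rw [this, norm_add_sq_real, real_inner_smul_right, norm_smul, Real.norm_eq_abs,
      abs_of_nonneg hd'0, hz]
    ring
  have hcs1 : |⟪v, z⟫| ≤ ‖v‖ := by
    calc |⟪v, z⟫| ≤ ‖v‖ * ‖z‖ := abs_real_inner_le_norm v z
    _ = ‖v‖ := by rw [hz, mul_one]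
  have hiz : ⟪‖v‖⁻¹ • v, z⟫ = ‖v‖⁻¹ * ⟪v, z⟫ := real_inner_smul_left v z _
  have hiy : ⟪‖v‖⁻¹ • v, y₁⟫ = ‖v‖⁻¹ * ⟪v, y₁⟫ := real_inner_smul_left v y₁ _
  rw [hqx, hiz, hiy]
  have key : 2 * ‖v‖ * d * (‖v‖⁻¹ * ⟪v, z⟫ - ‖v‖⁻¹ * ⟪v, y₁⟫)
      = 2 * d * ⟪v, z⟫ - 2 * d * ⟪v, y₁⟫ := by
    field_simp
  rw [key]
  have hlip2 : d ≤ d' + ‖v‖ := by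
    calc d ≤ d' + dist x (x + v) := Metric.infDist_le_infDist_add_dist
    _ = d' + ‖v‖ := by rw [dist_eq_norm]; simp
  have hprod : (d' - d) * ⟪v, z⟫ ≤ ‖v‖ * ‖v‖ := by
    calc (d' - d) * ⟪v, z⟫ ≤ |(d' - d) * ⟪v, z⟫| := le_abs_self _
    _ = |d' - d| * |⟪v, z⟫| := abs_mul _ _
    _ ≤ ‖v‖ * ‖v‖ := by
        apply mul_le_mul _ hcs1 (abs_nonneg _) (norm_nonneg v)
        rw [abs_le]; constructor <;> linarith
  nlinarith [hprod, hdp2]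
end

section
/- Let E ⊂ ℝ^n be a nonempty closed set. Then the (n+1)-medial axis M_{n+1}(E)—the set of points x whose nearest-point set φ(x) contains n+1 affinely independent points—is countable. -/
/-- The set of nearest points of `x` in `E`. -/
def nearestPts {n : ℕ} (E : Set (EuclideanSpace ℝ (Fin n))) (x : EuclideanSpace ℝ (Fin n)) :
    Set (EuclideanSpace ℝ (Fin n)) :=
  {y ∈ E | dist x y = Metric.infDist x E}

/-- The `k`-medial axis of `E`: points at positive distance from `E` whose nearest-point set
contains `k` points not all in a `(k-2)`-dimensional affine subspace, i.e. `k` affinely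
independent nearest points. -/
def medialAxis (n k : ℕ) (E : Set (EuclideanSpace ℝ (Fin n))) :
    Set (EuclideanSpace ℝ (Fin n)) :=
  {x | 0 < Metric.infDist x E ∧
    ∃ y : Fin k → EuclideanSpace ℝ (Fin n),
      (∀ i, y i ∈ nearestPts E x) ∧ AffineIndependent ℝ y}

open Metric

lemma halfspace_bound {n : ℕ} (E : Set (EuclideanSpace ℝ (Fin n)))
    (x x' : EuclideanSpace ℝ (Fin n)) {p : EuclideanSpace ℝ (Fin n)}
    (hp : p ∈ convexHull ℝ (nearestPts E x)) :
    (inner ℝ (x' - x) p : ℝ) ≤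
      (‖x' - x‖ ^ 2 + infDist x E ^ 2 - infDist x' E ^ 2) / 2 + inner ℝ (x' - x) x := by
  set C : ℝ := (‖x' - x‖ ^ 2 + infDist x E ^ 2 - infDist x' E ^ 2) / 2 + inner ℝ (x' - x) x
  have hconv : Convex ℝ {y : EuclideanSpace ℝ (Fin n) | (inner ℝ (x' - x) y : ℝ) ≤ C} := by
    refine convex_halfSpace_le ⟨fun a b => inner_add_right _ _ _,
      fun c a => real_inner_smul_right _ _ _⟩ C
  have hsub : nearestPts E x ⊆ {y : EuclideanSpace ℝ (Fin n) | (inner ℝ (x' - x) y : ℝ) ≤ C} := by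
    rintro y ⟨hyE, hyd⟩
    have h1 : infDist x' E ≤ dist x' y := infDist_le_dist_of_mem hyE
    have h2 : infDist x' E ^ 2 ≤ dist x' y ^ 2 := by
      have := infDist_nonneg (x := x') (s := E)
      nlinarith
    have hexp : dist x' y ^ 2 =
        ‖x' - x‖ ^ 2 + 2 * inner ℝ (x' - x) (x - y) + ‖x - y‖ ^ 2 := by
      rw [dist_eq_norm]
      have : x' - y = (x' - x) + (x - y) := by abel
      rw [this, @norm_add_sq_real]
    have hdy : ‖x - y‖ = infDist x E := by rw [← dist_eq_norm]; exact hyd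
    rw [hexp, hdy, inner_sub_right] at h2
    simp only [Set.mem_setOf_eq, C]
    nlinarith
  exact convexHull_min hsub hconv hp

lemma nearest_mono {n : ℕ} (E : Set (EuclideanSpace ℝ (Fin n)))
    (x x' p p' : EuclideanSpace ℝ (Fin n))
    (hp : p ∈ convexHull ℝ (nearestPts E x)) (hp' : p' ∈ convexHull ℝ (nearestPts E x')) :
    0 ≤ (inner ℝ (x - x') (p - p') : ℝ) := by
  have h1 := halfspace_bound E x x' hp
  have h2 := halfspace_bound E x' x hp'
  have hnorm : ‖x - x'‖ = ‖x' - x‖ := norm_sub_rev _ _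
  have e0 : (inner ℝ (x - x') p : ℝ) = - inner ℝ (x' - x) p := by
    rw [← inner_neg_left]; congr 1; abel
  have e1 : (inner ℝ (x - x') p' : ℝ) = - inner ℝ (x' - x) p' := by
    rw [← inner_neg_left]; congr 1; abel
  have e2 : (inner ℝ (x - x') x' : ℝ) = - inner ℝ (x' - x) x' := by
    rw [← inner_neg_left]; congr 1; abel
  have e3 : (inner ℝ (x' - x) x : ℝ) - inner ℝ (x' - x) x' = - ‖x' - x‖ ^ 2 := by
    rw [← inner_sub_right]
    have : x - x' = -(x' - x) := by abel
    rw [this, inner_neg_right, real_inner_self_eq_norm_sq]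
  rw [e1, e2, hnorm] at h2
  rw [inner_sub_right, e0, e1]
  linarith [h1, h2, e3]

lemma witness_subsingleton {n : ℕ} (E : Set (EuclideanSpace ℝ (Fin n)))
    (q : EuclideanSpace ℝ (Fin n)) {ε : ℝ} (hε : 0 < ε) :
    Set.Subsingleton {x | ball q ε ⊆ convexHull ℝ (nearestPts E x)} := by
  intro x hx x' hx'
  by_contra hne
  set u := x - x' with hu_def
  have hu : u ≠ 0 := sub_ne_zero.mpr hne
  have hu0 : 0 < ‖u‖ := norm_pos_iff.mpr hu
  set c : ℝ := ε / (2 * ‖u‖) with hc_def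
  have hc : 0 < c := by positivity
  have hcu : ‖c • u‖ = ε / 2 := by
    rw [norm_smul, Real.norm_eq_abs, abs_of_pos hc, hc_def]
    field_simp
  have hmemball : ∀ s : ℝ, |s| = 1 → q + (s * c) • u ∈ ball q ε := by
    intro s hs
    rw [mem_ball, dist_eq_norm]
    have : q + (s * c) • u - q = (s * c) • u := by abel
    rw [this, mul_smul, norm_smul, Real.norm_eq_abs, hs, one_mul, hcu]
    linarith
  have hp : q + ((-1 : ℝ) * c) • u ∈ convexHull ℝ (nearestPts E x) :=
    hx (hmemball (-1) (by norm_num))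
  have hp' : q + ((1 : ℝ) * c) • u ∈ convexHull ℝ (nearestPts E x') :=
    hx' (hmemball 1 (by norm_num))
  have h0 := nearest_mono E x x' _ _ hp hp'
  have hdiff : (q + ((-1 : ℝ) * c) • u) - (q + ((1 : ℝ) * c) • u) = (-(2 * c)) • u := by
    rw [neg_smul, one_mul, neg_one_mul, neg_smul]
    module
  rw [hdiff, real_inner_smul_right, real_inner_self_eq_norm_sq,
    show ‖x - x'‖ = ‖u‖ from rfl] at h0
  nlinarith [mul_pos hc (pow_pos hu0 2)]

theorem stmt10 (n : ℕ) (E : Set (EuclideanSpace ℝ (Fin n)))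
    (hEne : E.Nonempty) (hEcl : IsClosed E) :
    (medialAxis n (n + 1) E).Countable := by
  obtain ⟨D, hDc, hDd⟩ := TopologicalSpace.exists_countable_dense (EuclideanSpace ℝ (Fin n))
  have hcover : medialAxis n (n + 1) E ⊆
      ⋃ q ∈ D, ⋃ ε : ℚ, {x | 0 < (ε : ℝ) ∧ ball q (ε : ℝ) ⊆ convexHull ℝ (nearestPts E x)} := by
    rintro x ⟨-, y, hy, hind⟩
    have hspan : affineSpan ℝ (Set.range y) = ⊤ := by
      rw [hind.affineSpan_eq_top_iff_card_eq_finrank_add_one]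
      simp [finrank_euclideanSpace]
    have hint : (interior (convexHull ℝ (Set.range y))).Nonempty :=
      interior_convexHull_nonempty_iff_affineSpan_eq_top.mpr hspan
    obtain ⟨q, hqD, hq⟩ := hDd.exists_mem_open isOpen_interior hint
    obtain ⟨δ, hδ, hball⟩ := Metric.isOpen_iff.mp isOpen_interior q hq
    obtain ⟨ε, hε0, hεδ⟩ := exists_rat_btwn hδ
    refine Set.mem_iUnion₂.mpr ⟨q, hqD, Set.mem_iUnion.mpr ⟨ε, by exact_mod_cast hε0, ?_⟩⟩
    refine fun z hz => ?_
    have hz2 : z ∈ interior (convexHull ℝ (Set.range y)) :=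
      hball (mem_ball.mpr (lt_trans (mem_ball.mp hz) hεδ))
    have : z ∈ convexHull ℝ (Set.range y) := interior_subset hz2
    exact convexHull_mono (Set.range_subset_iff.mpr hy) this
  refine Set.Countable.mono hcover ?_
  refine hDc.biUnion fun q _ => Set.countable_iUnion fun ε => ?_
  rcases le_or_gt (ε : ℝ) 0 with h | h
  · convert Set.countable_empty
    ext x
    simp only [Set.mem_setOf_eq, Set.mem_empty_iff_false, iff_false, not_and]
    intro h'; linarith
  · exact Set.Subsingleton.countable fun x hx x' hx' =>
      witness_subsingleton E q h hx.2 hx'.2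
end

section
/- Let E ⊂ ℝ^n be a nonempty closed set and 2 ≤ k ≤ n+1. Then the k-medial axis M_k(E) is countably (n−k+1)-rectifiable; in particular its Hausdorff dimension is at most n−k+1. -/
set_option maxHeartbeats 1000000
set_option synthInstance.maxHeartbeats 400000

open MeasureTheory

/-- A set `S ⊆ ℝⁿ` is countably `m`-rectifiable if, up to an `H^m`-null set, it is covered by
countably many Lipschitz images of `ℝᵐ`. -/
def CountablyRectifiable (m : ℕ) {n : ℕ} (S : Set (EuclideanSpace ℝ (Fin n))) : Prop :=
  ∃ (f : ℕ → EuclideanSpace ℝ (Fin m) → EuclideanSpace ℝ (Fin n)) (K : ℕ → NNReal),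
    (∀ i, LipschitzWith (K i) (f i)) ∧
    μH[m] (S \ ⋃ i, Set.range (f i)) = 0

namespace Stmt12

open Metric Set Module MeasureTheory
open scoped RealInnerProductSpace ENNReal

/-- Key one-sided quadratic bound for the distance function. -/
lemma key_quad {n : ℕ} {E : Set (EuclideanSpace ℝ (Fin n))} {x y x' : EuclideanSpace ℝ (Fin n)}
    (hy : y ∈ nearestPts E x) (hr : 0 < Metric.infDist x E)
    (hh : ‖x' - x‖ ≤ Metric.infDist x E / 2) :
    Metric.infDist x' E ≤ Metric.infDist x E + ⟪x - y, x' - x⟫ / Metric.infDist x E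
      + ‖x' - x‖ ^ 2 / Metric.infDist x E := by
  obtain ⟨hyE, hxy⟩ := hy
  set r := Metric.infDist x E with hrdef
  have h1 : Metric.infDist x' E ≤ dist x' y := Metric.infDist_le_dist_of_mem hyE
  have h2 : dist x' y = ‖(x - y) + (x' - x)‖ := by
    rw [dist_eq_norm]; congr 1; abel
  have hw : ‖x - y‖ = r := by rw [← dist_eq_norm, hxy]
  set w := x - y
  set h := x' - x
  have hcs : |⟪w, h⟫| ≤ ‖w‖ * ‖h‖ := abs_real_inner_le_norm w h
  have hcs' : -(r * ‖h‖) ≤ ⟪w, h⟫ := by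
    rw [hw] at hcs
    have := (abs_le.mp hcs).1
    linarith
  have hsq : ‖w + h‖ ^ 2 = r ^ 2 + 2 * ⟪w, h⟫ + ‖h‖ ^ 2 := by
    rw [← hw, norm_add_sq_real]
  have hRnn : 0 ≤ r + ⟪w, h⟫ / r + ‖h‖ ^ 2 / r := by
    have : ⟪w, h⟫ / r ≥ -(‖h‖) := by
      rw [ge_iff_le, le_div_iff₀ hr]; nlinarith
    have h2 : 0 ≤ ‖h‖ ^ 2 / r := by positivity
    nlinarith [norm_nonneg h]
  have key : ‖w + h‖ ≤ r + ⟪w, h⟫ / r + ‖h‖ ^ 2 / r := by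
    have hsqle : ‖w + h‖ ^ 2 ≤ (r + ⟪w, h⟫ / r + ‖h‖ ^ 2 / r) ^ 2 := by
      have e1 : (r + ⟪w, h⟫ / r + ‖h‖ ^ 2 / r) ^ 2
          = r^2 + 2*⟪w, h⟫ + ‖h‖^2 + (⟪w, h⟫/r)^2 + (‖h‖^2/r)^2
            + 2*⟪w,h⟫*‖h‖^2/r^2 + ‖h‖^2 := by
        field_simp; ring
      rw [hsq, e1]
      have hb : -(‖h‖^2) ≤ 2*⟪w,h⟫*‖h‖^2/r^2 := by
        rw [le_div_iff₀ (show (0:ℝ) < r^2 by positivity)]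
        nlinarith [mul_le_mul_of_nonneg_right hcs' (sq_nonneg ‖h‖),
          mul_le_mul_of_nonneg_right hh (mul_nonneg hr.le (sq_nonneg ‖h‖))]
      nlinarith [sq_nonneg (⟪w, h⟫/r), sq_nonneg (‖h‖^2/r)]
    nlinarith [norm_nonneg (w + h)]
  calc Metric.infDist x' E ≤ dist x' y := h1
    _ = ‖w + h‖ := h2
    _ ≤ r + ⟪w, h⟫ / r + ‖h‖ ^ 2 / r := key


/-- Quantitative non-degeneracy of a tuple of points. -/
def good {n : ℕ} (p k : ℕ) (y : Fin k → EuclideanSpace ℝ (Fin n)) : Prop :=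
  ∀ w ∈ vectorSpan ℝ (Set.range y), ‖w‖ ≤ p * ∑ i, ∑ j, |⟪y i - y j, w⟫|

lemma good_mono {n : ℕ} {p q k : ℕ} {y : Fin k → EuclideanSpace ℝ (Fin n)} (h : good p k y)
    (hpq : p ≤ q) : good q k y := by
  intro w hw
  refine (h w hw).trans ?_
  have hnn : (0:ℝ) ≤ ∑ i, ∑ j, |⟪y i - y j, w⟫| := by positivity
  have : (p:ℝ) ≤ q := by exact_mod_cast hpq
  nlinarith

lemma good_exists {n k : ℕ} {y : Fin k → EuclideanSpace ℝ (Fin n)}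
    (hy : AffineIndependent ℝ y) : ∃ p : ℕ, good p k y := by
  classical
  set V := vectorSpan ℝ (Set.range y) with hV
  -- the linear map collecting all inner products with pairwise differences
  let L : V →ₗ[ℝ] (Fin k × Fin k → ℝ) :=
    { toFun := fun w ij => ⟪y ij.1 - y ij.2, (w : EuclideanSpace ℝ (Fin n))⟫
      map_add' := by intro a b; funext ij; simp [inner_add_right]
      map_smul' := by intro c a; funext ij; simp [inner_smul_right] }
  have hker : LinearMap.ker L = ⊥ := by
    rw [LinearMap.ker_eq_bot']
    intro w hw
    have hinner : ∀ i j : Fin k, ⟪y i - y j, (w : EuclideanSpace ℝ (Fin n))⟫ = 0 := by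
      intro i j
      have := congrFun hw (i, j)
      simpa [L] using this
    have key : ∀ u ∈ Submodule.span ℝ (Set.range y -ᵥ Set.range y),
        ⟪u, (w : EuclideanSpace ℝ (Fin n))⟫ = 0 := by
      intro u hsub
      induction hsub using Submodule.span_induction with
      | mem v hv =>
        obtain ⟨a, ⟨i, rfl⟩, b, ⟨j, rfl⟩, rfl⟩ := hv
        simpa [vsub_eq_sub] using hinner i j
      | zero => simp
      | add a b _ _ ha hb => rw [inner_add_left, ha, hb]; ring
      | smul c a _ ha => rw [real_inner_smul_left, ha]; ring
    have hperp : (w : EuclideanSpace ℝ (Fin n)) ∈ Vᗮ := by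
      rw [Submodule.mem_orthogonal]
      intro u hu
      exact key u hu
    have : (w : EuclideanSpace ℝ (Fin n)) = 0 := by
      have h0 : ⟪(w : EuclideanSpace ℝ (Fin n)), (w : EuclideanSpace ℝ (Fin n))⟫ = 0 :=
        (Submodule.mem_orthogonal Vᗮ _).mp ((Submodule.le_orthogonal_orthogonal V) w.2) _ hperp
      exact inner_self_eq_zero.mp h0
    exact Subtype.ext this
  obtain ⟨K, hK0, hKa⟩ := L.exists_antilipschitzWith hker
  refine ⟨⌈(K:ℝ)⌉₊, ?_⟩
  intro w hw
  set ww : V := ⟨w, hw⟩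
  have h1 : ‖ww‖ ≤ K * ‖L ww‖ := by
    have := hKa.le_mul_dist ww 0
    simpa [dist_eq_norm] using this
  have h2 : ‖L ww‖ ≤ ∑ i, ∑ j, |⟪y i - y j, w⟫| := by
    rw [pi_norm_le_iff_of_nonneg (by positivity)]
    intro ij
    have : ‖(L ww) ij‖ = |⟪y ij.1 - y ij.2, w⟫| := by simp [L, ww]
    rw [this]
    have : (∑ i, ∑ j, |⟪y i - y j, w⟫|) = ∑ q : Fin k × Fin k, |⟪y q.1 - y q.2, w⟫| := by
      rw [← Finset.sum_product']
      rfl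
    rw [this]
    exact Finset.single_le_sum (f := fun q : Fin k × Fin k => |⟪y q.1 - y q.2, w⟫|)
      (fun q _ => abs_nonneg _) (Finset.mem_univ ij)
  have h3 : ‖ww‖ = ‖w‖ := rfl
  have hKle : (K:ℝ) ≤ ⌈(K:ℝ)⌉₊ := Nat.le_ceil _
  have hnn : (0:ℝ) ≤ ∑ i, ∑ j, |⟪y i - y j, w⟫| := by positivity
  calc ‖w‖ = ‖ww‖ := h3.symm
    _ ≤ K * ‖L ww‖ := h1
    _ ≤ K * ∑ i, ∑ j, |⟪y i - y j, w⟫| := mul_le_mul_of_nonneg_left h2 K.2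
    _ ≤ ⌈(K:ℝ)⌉₊ * ∑ i, ∑ j, |⟪y i - y j, w⟫| := mul_le_mul_of_nonneg_right hKle hnn


/-- The stratification sets. -/
def Tset (n k : ℕ) (E : Set (EuclideanSpace ℝ (Fin n))) (p : ℕ) :
    Set ((EuclideanSpace ℝ (Fin n)) × (Fin k → EuclideanSpace ℝ (Fin n))) :=
  {z | 1 ≤ p ∧ 1/(p:ℝ) ≤ Metric.infDist z.1 E ∧ Metric.infDist z.1 E ≤ p ∧
       (∀ i, z.2 i ∈ nearestPts E z.1) ∧ AffineIndependent ℝ z.2 ∧ good p k z.2}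

noncomputable def eta (p k : ℕ) : ℝ := (36 * (p:ℝ)^5 * (k:ℝ)^2 + 4*p)⁻¹

lemma eta_pos {p k : ℕ} (hp : 1 ≤ p) (hk : 1 ≤ k) : 0 < eta p k := by
  rw [eta]
  have h1 : (1:ℝ) ≤ p := by exact_mod_cast hp
  have h2 : (1:ℝ) ≤ k := by exact_mod_cast hk
  positivity

/-- The core estimate: within a small piece of a stratum, displacements are almost orthogonal
to the vector span of the center configuration. -/
lemma piece_est {n k p : ℕ} {E : Set (EuclideanSpace ℝ (Fin n))}
    {z₀ z z' : (EuclideanSpace ℝ (Fin n)) × (Fin k → EuclideanSpace ℝ (Fin n))}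
    (hk : 1 ≤ k)
    (hz₀ : z₀ ∈ Tset n k E p) (hz : z ∈ Tset n k E p) (hz' : z' ∈ Tset n k E p)
    (hc1 : ‖z.1 - z₀.1‖ ≤ eta p k) (hc2 : ∀ i, ‖z.2 i - z₀.2 i‖ ≤ eta p k)
    (hc1' : ‖z'.1 - z₀.1‖ ≤ eta p k) (hc2' : ∀ i, ‖z'.2 i - z₀.2 i‖ ≤ eta p k) :
    ‖z'.1 - z.1‖ ≤ 2 * ‖(Submodule.orthogonalProjectionOnto (vectorSpan ℝ (Set.range z₀.2))ᗮ (z'.1 - z.1) :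
      EuclideanSpace ℝ (Fin n))‖ := by
  obtain ⟨x₀, y₀⟩ := z₀
  obtain ⟨x, y⟩ := z
  obtain ⟨x', y'⟩ := z'
  obtain ⟨hp1, -, -, -, -, hgood⟩ := hz₀
  obtain ⟨-, hr1, hr2, hy, -, -⟩ := hz
  obtain ⟨-, hr1', hr2', hy', -, -⟩ := hz'
  simp only at *
  set η := eta p k with hη
  set r := Metric.infDist x E with hrdef
  set r' := Metric.infDist x' E with hrdef'
  set h := x' - x with hhdef
  clear_value η r r' h
  have hp1R : (1:ℝ) ≤ p := by exact_mod_cast hp1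
  have hk1R : (1:ℝ) ≤ k := by exact_mod_cast hk
  have hpinv : 0 < 1/(p:ℝ) := by positivity
  have hp0 : (0:ℝ) ≤ (p:ℝ) := by positivity
  have hp3 : (p:ℝ) ≤ (p:ℝ)^3 := by
    have e1 : 0 ≤ ((p:ℝ)-1)*(p:ℝ) := mul_nonneg (by linarith) hp0
    have e2 : 0 ≤ ((p:ℝ)-1)*((p:ℝ)*(p:ℝ)) := mul_nonneg (by linarith) (by positivity)
    nlinarith [e1, e2]
  have hp24 : (p:ℝ)^2 ≤ (p:ℝ)^4 := by
    have e2 : 0 ≤ ((p:ℝ)-1)*((p:ℝ)*(p:ℝ)) := mul_nonneg (by linarith) (by positivity)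
    have e3 : 0 ≤ ((p:ℝ)-1)*((p:ℝ)*(p:ℝ)*(p:ℝ)) := mul_nonneg (by linarith) (by positivity)
    nlinarith [e2, e3]
  have hr0 : 0 < r := lt_of_lt_of_le hpinv hr1
  have hr0' : 0 < r' := lt_of_lt_of_le hpinv hr1'
  have hrp : 1/r ≤ p := by
    rw [div_le_iff₀ hr0]
    rw [div_le_iff₀ (by positivity : (0:ℝ) < (p:ℝ))] at hr1
    linarith
  have hrp' : 1/r' ≤ p := by
    rw [div_le_iff₀ hr0']
    rw [div_le_iff₀ (by positivity : (0:ℝ) < (p:ℝ))] at hr1'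
    linarith
  have hpr : (1:ℝ) ≤ (p:ℝ)*r := by
    rw [div_le_iff₀ (by positivity : (0:ℝ) < (p:ℝ))] at hr1
    linarith
  have hpr' : (1:ℝ) ≤ (p:ℝ)*r' := by
    rw [div_le_iff₀ (by positivity : (0:ℝ) < (p:ℝ))] at hr1'
    linarith
  -- bounds on η
  have hden : 0 < 36 * (p:ℝ)^5 * (k:ℝ)^2 + 4*p := by positivity
  have hη0 : 0 < η := by rw [hη, eta]; positivity
  have hη4p : η * (4*p) ≤ 1 := by
    rw [hη, eta]
    rw [inv_mul_le_iff₀ hden]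
    have : (0:ℝ) ≤ 36 * (p:ℝ)^5 * (k:ℝ)^2 := by positivity
    linarith
  have hη36 : η * (36 * (p:ℝ)^5 * (k:ℝ)^2) ≤ 1 := by
    rw [hη, eta]
    rw [inv_mul_le_iff₀ hden]
    have : (0:ℝ) ≤ 4*(p:ℝ) := by positivity
    linarith
  -- distance between the two base points
  have hhle : ‖h‖ ≤ 2*η := by
    calc ‖h‖ = ‖(x' - x₀) - (x - x₀)‖ := by rw [hhdef]; congr 1; abel
    _ ≤ ‖x' - x₀‖ + ‖x - x₀‖ := norm_sub_le _ _
    _ ≤ 2*η := by linarith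
  have hhr : ‖h‖ ≤ r/2 := by
    have : 2*η ≤ 1/(2*p) := by
      rw [le_div_iff₀ (by positivity)]; nlinarith
    have h2 : 1/(2*(p:ℝ)) ≤ r/2 := by
      rw [div_le_div_iff₀ (by positivity) (by positivity)]
      rw [div_le_iff₀ (by positivity : (0:ℝ) < (p:ℝ))] at hr1
      nlinarith
    linarith
  have hhr' : ‖h‖ ≤ r'/2 := by
    have : 2*η ≤ 1/(2*p) := by
      rw [le_div_iff₀ (by positivity)]; nlinarith
    have h2 : 1/(2*(p:ℝ)) ≤ r'/2 := by
      rw [div_le_div_iff₀ (by positivity) (by positivity)]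
      rw [div_le_iff₀ (by positivity : (0:ℝ) < (p:ℝ))] at hr1'
      nlinarith
    linarith
  set s := r' - r with hsdef
  clear_value s
  have hs2 : |s| ≤ ‖h‖ := by
    rw [abs_le]
    constructor
    · have := Metric.infDist_le_infDist_add_dist (x := x) (y := x') (s := E)
      rw [dist_eq_norm] at this
      have hn : ‖x - x'‖ = ‖h‖ := by rw [hhdef, norm_sub_rev]
      rw [← hrdef, ← hrdef'] at this
      linarith [this, hn.le, hn.ge]
    · have := Metric.infDist_le_infDist_add_dist (x := x') (y := x) (s := E)
      rw [dist_eq_norm] at this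
      rw [← hrdef, ← hrdef', ← hhdef] at this
      linarith [this]
  -- one-sided bounds
  have hA1 : ∀ i, s - p*‖h‖^2 ≤ ⟪x - y i, h⟫ / r := by
    intro i
    have := key_quad (hy i) (show 0 < Metric.infDist x E by rw [← hrdef]; exact hr0)
      (show ‖x' - x‖ ≤ Metric.infDist x E / 2 by rw [← hrdef, ← hhdef]; exact hhr)
    rw [← hrdef, ← hrdef', ← hhdef] at this
    have h2 : ‖h‖^2/r ≤ p*‖h‖^2 := by
      rw [div_le_iff₀ hr0]
      calc ‖h‖^2 = ‖h‖^2 * (1/r*r) := by field_simp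
        _ ≤ ‖h‖^2*((p:ℝ)*r) := by
            have := mul_le_mul_of_nonneg_left (mul_le_mul_of_nonneg_right hrp hr0.le)
              (sq_nonneg ‖h‖)
            linarith
        _ = (p:ℝ)*‖h‖^2*r := by ring
    linarith
  have hA2 : ∀ i, ⟪x' - y' i, h⟫ / r' ≤ s + p*‖h‖^2 := by
    intro i
    have hq := key_quad (hy' i) (show 0 < Metric.infDist x' E by rw [← hrdef']; exact hr0')
      (by rw [show x - x' = -h by rw [hhdef]; abel, norm_neg, ← hrdef']; exact hhr')
    rw [← hrdef, ← hrdef'] at hq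
    have hne : ⟪x' - y' i, x - x'⟫ = -⟪x' - y' i, h⟫ := by
      rw [show x - x' = -h by rw [hhdef]; abel, inner_neg_right]
    rw [hne] at hq
    have h2 : ‖x - x'‖^2/r' ≤ p*‖h‖^2 := by
      rw [show x - x' = -h by rw [hhdef]; abel, norm_neg]
      rw [div_le_iff₀ hr0']
      calc ‖h‖^2 = ‖h‖^2 * (1/r'*r') := by field_simp
        _ ≤ ‖h‖^2*((p:ℝ)*r') := by
            have := mul_le_mul_of_nonneg_left (mul_le_mul_of_nonneg_right hrp' hr0'.le)
              (sq_nonneg ‖h‖)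
            linarith
        _ = (p:ℝ)*‖h‖^2*r' := by ring
    have h3 : -⟪x' - y' i, h⟫/r' ≥ -s - p*‖h‖^2 := by
      have := hq
      rw [neg_div] at *
      linarith
    rw [neg_div] at h3
    linarith
  -- closeness of normalized inner products
  have hclose : ∀ i, |⟪x - y i, h⟫ / r - ⟪x' - y' i, h⟫ / r'| ≤ 6*η*p^3*‖h‖ := by
    intro i
    have hC : ⟪(x - y i) - (x' - y' i), h⟫ = ⟪x - y i, h⟫ - ⟪x' - y' i, h⟫ :=
      inner_sub_left _ _ _
    have hid : ⟪x - y i, h⟫ / r - ⟪x' - y' i, h⟫ / r'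
        = ⟪(x - y i) - (x' - y' i), h⟫ / r + ⟪x' - y' i, h⟫ * (1/r - 1/r') := by
      rw [hC]; field_simp; ring
    have hb1 : |⟪(x - y i) - (x' - y' i), h⟫ / r| ≤ 4*η*p*‖h‖ := by
      rw [abs_div, abs_of_pos hr0, div_le_iff₀ hr0]
      have hnd : ‖(x - y i) - (x' - y' i)‖ ≤ 4*η := by
        have : (x - y i) - (x' - y' i) = -h + (y' i - y₀ i) - (y i - y₀ i) := by
          rw [hhdef]; abel
        rw [this]
        calc ‖-h + (y' i - y₀ i) - (y i - y₀ i)‖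
            ≤ ‖-h + (y' i - y₀ i)‖ + ‖y i - y₀ i‖ := norm_sub_le _ _
          _ ≤ ‖h‖ + ‖y' i - y₀ i‖ + ‖y i - y₀ i‖ := by
              have := norm_add_le (-h) (y' i - y₀ i)
              rw [norm_neg] at this
              linarith
          _ ≤ 4*η := by linarith [hc2 i, hc2' i, hhle]
      have hcs := abs_real_inner_le_norm ((x - y i) - (x' - y' i)) h
      have h4 : |⟪(x - y i) - (x' - y' i), h⟫| ≤ 4*η*‖h‖ := by
        have := mul_le_mul_of_nonneg_right hnd (norm_nonneg h)
        linarith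
      have h5 : (4*η*‖h‖) * 1 ≤ (4*η*‖h‖) * ((p:ℝ)*r) :=
        mul_le_mul_of_nonneg_left hpr (by positivity)
      linarith [h4, h5]
    have hb2 : |⟪x' - y' i, h⟫ * (1/r - 1/r')| ≤ 2*η*(p:ℝ)^3*‖h‖ := by
      have hxy' : ‖x' - y' i‖ = r' := by
        have hd := (hy' i).2
        rw [dist_eq_norm] at hd
        rw [hd, ← hrdef']
      have hi : |⟪x' - y' i, h⟫| ≤ r' * ‖h‖ := by
        have := abs_real_inner_le_norm (x' - y' i) h
        rwa [hxy'] at this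
      have hdiff : |1/r - 1/r'| ≤ 2*η*(p:ℝ)^2 := by
        have hid2 : 1/r - 1/r' = (r' - r)/(r*r') := by field_simp
        rw [hid2, abs_div, abs_of_pos (by positivity : (0:ℝ) < r*r'), div_le_iff₀ (by positivity)]
        have habs : |r' - r| ≤ 2*η := by rw [← hsdef]; exact le_trans hs2 hhle
        have hrr : (1:ℝ)*1 ≤ ((p:ℝ)*r)*((p:ℝ)*r') := mul_le_mul hpr hpr' zero_le_one
          (le_trans zero_le_one hpr)
        have := mul_le_mul_of_nonneg_left hrr (show (0:ℝ) ≤ 2*η by positivity)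
        linarith
      calc |⟪x' - y' i, h⟫ * (1/r - 1/r')| = |⟪x' - y' i, h⟫| * |1/r - 1/r'| := abs_mul _ _
        _ ≤ (r'*‖h‖) * (2*η*(p:ℝ)^2) :=
            mul_le_mul hi hdiff (abs_nonneg _) (by positivity)
        _ = r' * (‖h‖*(2*η*(p:ℝ)^2)) := by ring
        _ ≤ (p:ℝ) * (‖h‖*(2*η*(p:ℝ)^2)) :=
            mul_le_mul_of_nonneg_right hr2' (by positivity)
        _ = 2*η*(p:ℝ)^3*‖h‖ := by ring
    rw [hid]
    calc |⟪(x - y i) - (x' - y' i), h⟫ / r + ⟪x' - y' i, h⟫ * (1/r - 1/r')|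
        ≤ |⟪(x - y i) - (x' - y' i), h⟫ / r| + |⟪x' - y' i, h⟫ * (1/r - 1/r')| := abs_add_le _ _
      _ ≤ 4*η*(p:ℝ)*‖h‖ + 2*η*(p:ℝ)^3*‖h‖ := add_le_add hb1 hb2
      _ ≤ 6*η*(p:ℝ)^3*‖h‖ := by
          have := mul_le_mul_of_nonneg_left hp3 (show (0:ℝ) ≤ 4*η*‖h‖ by positivity)
          linarith
  -- pairwise bounds for the actual configuration
  have hpair : ∀ i j : Fin k, |⟪y j - y i, h⟫| ≤ 10*η*(p:ℝ)^4*‖h‖ := by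
    intro i j
    have hij : ⟪y j - y i, h⟫/r = ⟪x - y i, h⟫/r - ⟪x - y j, h⟫/r := by
      rw [div_sub_div_same, ← inner_sub_left]
      congr 2
      abel
    have hup : ∀ i : Fin k, ⟪x - y i, h⟫/r ≤ s + (p:ℝ)*‖h‖^2 + 6*η*(p:ℝ)^3*‖h‖ := by
      intro i
      have h1 := (abs_le.mp (hclose i)).2
      have h2 := hA2 i
      linarith
    have hd : |⟪y j - y i, h⟫/r| ≤ 2*(p:ℝ)*‖h‖^2 + 6*η*(p:ℝ)^3*‖h‖ := by
      rw [hij, abs_le]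
      constructor
      · linarith [hA1 i, hup j]
      · linarith [hA1 j, hup i]
    have heq : |⟪y j - y i, h⟫| = |⟪y j - y i, h⟫/r| * r := by
      rw [abs_div, abs_of_pos hr0, div_mul_cancel₀ _ (ne_of_gt hr0)]
    rw [heq]
    have hhsq : ‖h‖^2 ≤ 2*η*‖h‖ := by
      have := mul_le_mul_of_nonneg_right hhle (norm_nonneg h)
      calc ‖h‖^2 = ‖h‖*‖h‖ := by rw [pow_two]
        _ ≤ 2*η*‖h‖ := this
    have hstep : |⟪y j - y i, h⟫/r| * r ≤ (2*(p:ℝ)*‖h‖^2 + 6*η*(p:ℝ)^3*‖h‖) * (p:ℝ) :=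
      mul_le_mul hd hr2 hr0.le (by positivity)
    have m1 := mul_le_mul_of_nonneg_left hhsq (show (0:ℝ) ≤ 2*(p:ℝ)^2 by positivity)
    have m2 := mul_le_mul_of_nonneg_left hp24 (show (0:ℝ) ≤ 4*η*‖h‖ by positivity)
    linarith [hstep, m1, m2]
  -- transfer to the center configuration
  have hpair0 : ∀ i j : Fin k, |⟪y₀ i - y₀ j, h⟫| ≤ 12*η*(p:ℝ)^4*‖h‖ := by
    intro i j
    have hsplit : ⟪y₀ i - y₀ j, h⟫ = ⟪y i - y j, h⟫ + ⟪(y₀ i - y i) - (y₀ j - y j), h⟫ := by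
      rw [← inner_add_left]
      congr 1
      abel
    have hnd : ‖(y₀ i - y i) - (y₀ j - y j)‖ ≤ 2*η := by
      have n1 : ‖y₀ i - y i‖ ≤ η := by rw [norm_sub_rev]; exact hc2 i
      have n2 : ‖y₀ j - y j‖ ≤ η := by rw [norm_sub_rev]; exact hc2 j
      calc ‖(y₀ i - y i) - (y₀ j - y j)‖ ≤ ‖y₀ i - y i‖ + ‖y₀ j - y j‖ := norm_sub_le _ _
        _ ≤ 2*η := by linarith
    have hD : |⟪(y₀ i - y i) - (y₀ j - y j), h⟫| ≤ 2*η*‖h‖ := by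
      have hcs := abs_real_inner_le_norm ((y₀ i - y i) - (y₀ j - y j)) h
      have := mul_le_mul_of_nonneg_right hnd (norm_nonneg h)
      linarith
    have hp14 : (1:ℝ) ≤ (p:ℝ)^4 := by
      calc (1:ℝ) = 1^4 := by norm_num
        _ ≤ (p:ℝ)^4 := by
          apply pow_le_pow_left₀ (by norm_num) hp1R
    have h2eta : 2*η*‖h‖ ≤ 2*η*(p:ℝ)^4*‖h‖ := by
      have := mul_le_mul_of_nonneg_left hp14 (show (0:ℝ) ≤ 2*η*‖h‖ by positivity)
      linarith
    have hD2 : |⟪(y₀ i - y i) - (y₀ j - y j), h⟫| ≤ 2*η*(p:ℝ)^4*‖h‖ := le_trans hD h2eta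
    calc |⟪y₀ i - y₀ j, h⟫|
        = |⟪y i - y j, h⟫ + ⟪(y₀ i - y i) - (y₀ j - y j), h⟫| := by rw [hsplit]
      _ ≤ |⟪y i - y j, h⟫| + |⟪(y₀ i - y i) - (y₀ j - y j), h⟫| := abs_add_le _ _
      _ ≤ 10*η*(p:ℝ)^4*‖h‖ + 2*η*(p:ℝ)^4*‖h‖ := add_le_add (hpair j i) hD2
      _ = 12*η*(p:ℝ)^4*‖h‖ := by ring
  -- projection estimate
  have hVmem : ∀ i j : Fin k, y₀ i - y₀ j ∈ vectorSpan ℝ (Set.range y₀) := by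
    intro i j
    have := vsub_mem_vectorSpan ℝ (Set.mem_range_self (f := y₀) i) (Set.mem_range_self j)
    simpa [vsub_eq_sub] using this
  set V := vectorSpan ℝ (Set.range y₀) with hVdef
  set b := (Submodule.orthogonalProjectionOnto V h : EuclideanSpace ℝ (Fin n)) with hbdef
  have hproj : ∀ i j : Fin k, ⟪y₀ i - y₀ j, b⟫ = ⟪y₀ i - y₀ j, h⟫ := by
    intro i j
    have hmem := Submodule.sub_starProjection_mem_orthogonal (K := V) h
    have h0 : ⟪y₀ i - y₀ j, h - b⟫ = 0 :=
      Submodule.inner_right_of_mem_orthogonal (hVmem i j) hmem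
    rw [inner_sub_right] at h0
    linarith
  have hbnorm : ‖b‖ ≤ (1/3)*‖h‖ := by
    have h1 : ‖b‖ ≤ p * ∑ i, ∑ j, |⟪y₀ i - y₀ j, b⟫| :=
      hgood b (Submodule.orthogonalProjectionOnto V h).2
    have h2 : ∑ i, ∑ j, |⟪y₀ i - y₀ j, b⟫| ≤ (k:ℝ)^2 * (12*η*(p:ℝ)^4*‖h‖) := by
      have hterm : ∀ i j : Fin k, |⟪y₀ i - y₀ j, b⟫| ≤ 12*η*(p:ℝ)^4*‖h‖ := by
        intro i j
        rw [hproj i j]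
        exact hpair0 i j
      calc ∑ i, ∑ j, |⟪y₀ i - y₀ j, b⟫|
          ≤ ∑ i : Fin k, ∑ j : Fin k, (12*η*(p:ℝ)^4*‖h‖) := by
            refine Finset.sum_le_sum fun i _ => Finset.sum_le_sum fun j _ => hterm i j
        _ = (k:ℝ)^2 * (12*η*(p:ℝ)^4*‖h‖) := by
            simp [Finset.sum_const, Finset.card_univ]
            ring
      
    have h3 : ‖b‖ ≤ (p:ℝ) * ((k:ℝ)^2 * (12*η*(p:ℝ)^4*‖h‖)) := by
      refine h1.trans (mul_le_mul_of_nonneg_left h2 hp0)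
    have h4 : (p:ℝ) * ((k:ℝ)^2 * (12*η*(p:ℝ)^4*‖h‖)) = (η * (36*(p:ℝ)^5*(k:ℝ)^2)) * ‖h‖/3 := by
      ring
    have h5 : (η * (36*(p:ℝ)^5*(k:ℝ)^2)) * ‖h‖/3 ≤ 1 * ‖h‖/3 := by
      have hnn : 0 ≤ ‖h‖ := norm_nonneg h
      have := mul_le_mul_of_nonneg_right hη36 hnn
      linarith
    rw [h4] at h3
    linarith [h5]
  -- Pythagoras and conclusion
  have hpyth : ‖h‖^2 = ‖b‖^2 + ‖(Submodule.orthogonalProjectionOnto Vᗮ h : EuclideanSpace ℝ (Fin n))‖^2 := by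
    have := Submodule.norm_sq_eq_add_norm_sq_projection h V
    simpa [hbdef] using this
  have hcn : 0 ≤ ‖(Submodule.orthogonalProjectionOnto Vᗮ h : EuclideanSpace ℝ (Fin n))‖ := norm_nonneg _
  have hbn : 0 ≤ ‖b‖ := norm_nonneg _
  nlinarith [hpyth, hbnorm, hcn, hbn, norm_nonneg h]



/-- A set on which a Lipschitz linear map is invertible with a 2-Lipschitz inverse is contained
in the range of a Lipschitz map. -/
lemma piece_covered {n m : ℕ} (S : Set (EuclideanSpace ℝ (Fin n)))
    (g : EuclideanSpace ℝ (Fin n) →L[ℝ] EuclideanSpace ℝ (Fin m))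
    (hg : ∀ x ∈ S, ∀ x' ∈ S, ‖x - x'‖ ≤ 2 * ‖g (x - x')‖) :
    ∃ (f : EuclideanSpace ℝ (Fin m) → EuclideanSpace ℝ (Fin n)) (K : NNReal),
      LipschitzWith K f ∧ S ⊆ Set.range f := by
  classical
  set A := g '' S with hA
  set f₀ : EuclideanSpace ℝ (Fin m) → EuclideanSpace ℝ (Fin n) :=
    fun z => if h : ∃ x ∈ S, g x = z then h.choose else 0 with hf₀
  have hf₀S : ∀ z ∈ A, f₀ z ∈ S ∧ g (f₀ z) = z := by
    intro z hz
    obtain ⟨x, hx, rfl⟩ := hz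
    have hex : ∃ x' ∈ S, g x' = g x := ⟨x, hx, rfl⟩
    simp only [hf₀, dif_pos hex]
    exact ⟨hex.choose_spec.1, hex.choose_spec.2⟩
  have hlip : LipschitzOnWith 2 f₀ A := by
    rw [lipschitzOnWith_iff_dist_le_mul]
    intro z hz z' hz'
    obtain ⟨hS1, hg1⟩ := hf₀S z hz
    obtain ⟨hS2, hg2⟩ := hf₀S z' hz'
    rw [dist_eq_norm, dist_eq_norm]
    calc ‖f₀ z - f₀ z'‖ ≤ 2 * ‖g (f₀ z - f₀ z')‖ := hg _ hS1 _ hS2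
      _ = 2 * ‖z - z'‖ := by rw [map_sub, hg1, hg2]
  -- transfer to sup-norm pi type, extend, transfer back
  set e : EuclideanSpace ℝ (Fin n) ≃L[ℝ] (Fin n → ℝ) :=
    (EuclideanSpace.equiv (Fin n) ℝ) with he
  obtain ⟨Ke, hKe⟩ : ∃ K, LipschitzWith K (e : EuclideanSpace ℝ (Fin n) → (Fin n → ℝ)) :=
    ⟨‖e.toContinuousLinearMap‖₊, e.toContinuousLinearMap.lipschitz⟩
  have hcomp : LipschitzOnWith (Ke * 2) (fun z => e (f₀ z)) A :=
    LipschitzWith.comp_lipschitzOnWith hKe hlip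
  obtain ⟨G, hG, hGeq⟩ := hcomp.extend_pi
  set f : EuclideanSpace ℝ (Fin m) → EuclideanSpace ℝ (Fin n) := fun z => e.symm (G z) with hf
  obtain ⟨Ks, hKs⟩ : ∃ K, LipschitzWith K (e.symm : (Fin n → ℝ) → EuclideanSpace ℝ (Fin n)) :=
    ⟨‖e.symm.toContinuousLinearMap‖₊, e.symm.toContinuousLinearMap.lipschitz⟩
  refine ⟨f, Ks * (Ke * 2), hKs.comp hG, ?_⟩
  intro x hx
  refine ⟨g x, ?_⟩
  have hzA : g x ∈ A := ⟨x, hx, rfl⟩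
  have h1 : G (g x) = e (f₀ (g x)) := (hGeq hzA).symm
  have h2 : f₀ (g x) = x := by
    obtain ⟨hS, hgz⟩ := hf₀S (g x) hzA
    have := hg _ hS _ hx
    rw [map_sub, hgz, sub_self, norm_zero, mul_zero] at this
    have : f₀ (g x) - x = 0 := by
      rwa [norm_le_zero_iff] at this
    rwa [sub_eq_zero] at this
  rw [hf]
  simp only [h1, h2]
  exact e.symm_apply_apply x


/-- Each piece of the stratification is covered by a Lipschitz image of `ℝ^{n+1-k}`. -/
lemma piece_lemma {n k p : ℕ} {E : Set (EuclideanSpace ℝ (Fin n))}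
    (hk : 1 ≤ k) (hkn : k ≤ n + 1)
    {z₀ : (EuclideanSpace ℝ (Fin n)) × (Fin k → EuclideanSpace ℝ (Fin n))}
    (hz₀ : z₀ ∈ Tset n k E p) :
    ∃ (f : EuclideanSpace ℝ (Fin (n + 1 - k)) → EuclideanSpace ℝ (Fin n)) (K : NNReal),
      LipschitzWith K f ∧
      {x | ∃ y, (x, y) ∈ Tset n k E p ∧ ‖x - z₀.1‖ ≤ eta p k ∧
        ∀ i, ‖y i - z₀.2 i‖ ≤ eta p k} ⊆ Set.range f := by
  classical
  set V := vectorSpan ℝ (Set.range z₀.2) with hVdef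
  have haff : AffineIndependent ℝ z₀.2 := hz₀.2.2.2.2.1
  have hfV : finrank ℝ V = k - 1 := by
    apply haff.finrank_vectorSpan
    simp only [Fintype.card_fin]
    omega
  have hsum : finrank ℝ V + finrank ℝ ↥Vᗮ = n := by
    have := V.finrank_add_finrank_orthogonal
    rwa [finrank_euclideanSpace_fin] at this
  have hfVp : finrank ℝ ↥Vᗮ = n + 1 - k := by omega
  let ι : ↥Vᗮ ≃ₗᵢ[ℝ] EuclideanSpace ℝ (Fin (n + 1 - k)) :=
    ((stdOrthonormalBasis ℝ ↥Vᗮ).reindex (finCongr hfVp)).repr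
  let g : EuclideanSpace ℝ (Fin n) →L[ℝ] EuclideanSpace ℝ (Fin (n + 1 - k)) :=
    ι.toLinearIsometry.toContinuousLinearMap.comp (Submodule.orthogonalProjectionOnto Vᗮ)
  apply piece_covered _ g
  intro x hx x' hx'
  obtain ⟨y, hzy, hc1, hc2⟩ := hx
  obtain ⟨y', hzy', hc1', hc2'⟩ := hx'
  have := piece_est hk hz₀ hzy' hzy hc1' hc2' hc1 hc2
  simp only at this
  have hgn : ‖g (x - x')‖ = ‖(Submodule.orthogonalProjectionOnto Vᗮ (x - x') : EuclideanSpace ℝ (Fin n))‖ := by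
    simp only [g, ContinuousLinearMap.coe_comp', Function.comp_apply,
      LinearIsometry.coe_toContinuousLinearMap, LinearIsometryEquiv.coe_toLinearIsometry,
      LinearIsometryEquiv.norm_map]
    rfl
  rw [hgn]
  exact this


theorem main (n k : ℕ) (E : Set (EuclideanSpace ℝ (Fin n)))
    (hk2 : 2 ≤ k) (hkn : k ≤ n + 1) :
    CountablyRectifiable (n + 1 - k) (medialAxis n k E) ∧
    dimH (medialAxis n k E) ≤ (n + 1 - k : ℕ) := by
  classical
  have hk1 : 1 ≤ k := by omega
  -- countable dense subsets of the strata
  have hDex : ∀ p : ℕ, ∃ D : Set (↥(Tset n k E p)), D.Countable ∧ Dense D := fun p =>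
    TopologicalSpace.exists_countable_dense _
  choose D hDc hDd using hDex
  -- Lipschitz maps covering each piece
  have hpiece : ∀ (p : ℕ) (d : ↥(Tset n k E p)),
      ∃ (f : EuclideanSpace ℝ (Fin (n + 1 - k)) → EuclideanSpace ℝ (Fin n)) (K : NNReal),
        LipschitzWith K f ∧
        {x | ∃ y, (x, y) ∈ Tset n k E p ∧ ‖x - d.1.1‖ ≤ eta p k ∧
          ∀ i, ‖y i - d.1.2 i‖ ≤ eta p k} ⊆ Set.range f :=
    fun p d => piece_lemma hk1 hkn d.2
  choose f K hlip hsub using hpiece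
  haveI : ∀ p : ℕ, Countable ↥(D p) := fun p => (hDc p).to_subtype
  set ι := Σ p : ℕ, ↥(D p) with hι
  have hcov : medialAxis n k E ⊆ ⋃ i : ι, Set.range (f i.1 i.2.1) := by
    intro x hx
    obtain ⟨hpos, y, hy, haff⟩ := hx
    obtain ⟨p₀, hgood₀⟩ := good_exists haff
    set r := Metric.infDist x E with hrdef
    set p := p₀ + ⌈1/r⌉₊ + ⌈r⌉₊ + 1 with hpdef
    have hp1 : 1 ≤ p := by omega
    have hpR : (0:ℝ) < p := by positivity
    have hz : (x, y) ∈ Tset n k E p := by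
      refine ⟨hp1, ?_, ?_, hy, haff, good_mono hgood₀ (by omega)⟩
      · have hle : ⌈1/r⌉₊ ≤ p := by omega
        have h1 : 1/r ≤ (p:ℝ) := (Nat.le_ceil _).trans (by exact_mod_cast hle)
        rw [div_le_iff₀ hpR]
        rw [div_le_iff₀ hpos] at h1
        nlinarith
      · have hle : ⌈r⌉₊ ≤ p := by omega
        exact (Nat.le_ceil r).trans (by exact_mod_cast hle)
    have hη : 0 < eta p k := eta_pos hp1 hk1
    obtain ⟨d, hd⟩ := Metric.dense_iff.mp (hDd p) ⟨(x, y), hz⟩ (eta p k) hη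
    have hdD : d ∈ D p := hd.2
    have hdist : dist (⟨(x, y), hz⟩ : ↥(Tset n k E p)) d < eta p k := by
      have h1 := hd.1
      rwa [Metric.mem_ball, dist_comm] at h1
    have hdist' : dist ((x, y) : _ × _) d.1 < eta p k := by
      rw [Subtype.dist_eq] at hdist
      exact hdist
    have hmem : x ∈ {x' | ∃ y', (x', y') ∈ Tset n k E p ∧ ‖x' - d.1.1‖ ≤ eta p k ∧
        ∀ i, ‖y' i - d.1.2 i‖ ≤ eta p k} := by
      refine ⟨y, hz, ?_, ?_⟩
      · rw [← dist_eq_norm]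
        calc dist x d.1.1 ≤ dist ((x,y) : _ × _) d.1 := by
              rw [Prod.dist_eq]; exact le_max_left _ _
          _ ≤ eta p k := hdist'.le
      · intro i
        rw [← dist_eq_norm]
        calc dist (y i) (d.1.2 i) ≤ dist y d.1.2 := dist_le_pi_dist _ _ i
          _ ≤ dist ((x,y) : _ × _) d.1 := by rw [Prod.dist_eq]; exact le_max_right _ _
          _ ≤ eta p k := hdist'.le
    have := hsub p d hmem
    exact Set.mem_iUnion.mpr ⟨⟨p, ⟨d, hdD⟩⟩, this⟩
  -- repackage over ℕ
  haveI : Nonempty (Option ι) := ⟨none⟩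
  haveI hcι : Countable ι := by
    rw [hι]
    infer_instance
  obtain ⟨e, he⟩ := exists_surjective_nat (Option ι)
  set fN : ℕ → EuclideanSpace ℝ (Fin (n + 1 - k)) → EuclideanSpace ℝ (Fin n) :=
    fun j => (e j).elim 0 (fun i => f i.1 i.2.1) with hfN
  set KN : ℕ → NNReal := fun j => (e j).elim 0 (fun i => K i.1 i.2.1) with hKN
  have hlipN : ∀ j, LipschitzWith (KN j) (fN j) := by
    intro j
    rcases hej : e j with _ | i
    · simp only [hfN, hKN, hej, Option.elim]
      exact LipschitzWith.const _
    · simp only [hfN, hKN, hej, Option.elim]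
      exact hlip _ _
  have hcovN : medialAxis n k E ⊆ ⋃ j, Set.range (fN j) := by
    intro x hx
    obtain ⟨i, hi⟩ := Set.mem_iUnion.mp (hcov hx)
    obtain ⟨j, hj⟩ := he (some i)
    refine Set.mem_iUnion.mpr ⟨j, ?_⟩
    simp only [hfN, hj, Option.elim]
    exact hi
  constructor
  · refine ⟨fN, KN, hlipN, ?_⟩
    rw [Set.diff_eq_empty.mpr hcovN]
    exact measure_empty
  · calc dimH (medialAxis n k E) ≤ dimH (⋃ j, Set.range (fN j)) := dimH_mono hcovN
      _ = ⨆ j, dimH (Set.range (fN j)) := dimH_iUnion _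
      _ ≤ ((n + 1 - k : ℕ) : ℝ≥0∞) := by
          refine iSup_le fun j => ?_
          rw [← Set.image_univ]
          refine ((hlipN j).dimH_image_le _).trans ?_
          rw [Real.dimH_univ_eq_finrank, finrank_euclideanSpace_fin]


end Stmt12

theorem stmt12 (n k : ℕ) (E : Set (EuclideanSpace ℝ (Fin n)))
    (hEne : E.Nonempty) (hEcl : IsClosed E)
    (hk2 : 2 ≤ k) (hkn : k ≤ n + 1) :
    CountablyRectifiable (n + 1 - k) (medialAxis n k E) ∧
    dimH (medialAxis n k E) ≤ (n + 1 - k : ℕ) := by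
  exact Stmt12.main n k E hk2 hkn
end

section
/- Let E ⊂ ℝ^n be a nonempty closed set, 2 ≤ k ≤ n+1, and fix a = {a_1,...,a_k} ⊂ S^{n-1} in generic position and d > 0. Then there exist ε, δ, t, r > 0, depending only on a and d, such that for every x ∈ M(a,d,ε,δ) one has ((x + P_r) \ {x}) ∩ B(x,t) ∩ M(a,d,ε,δ) = ∅, where P is the (k−1)-dimensional linear subspace parallel to the affine span of a and P_r = {v : dist(v,P) < r‖v‖}. -/
set_option maxHeartbeats 1000000


open MeasureTheory

/-- `MSet E a d ε δ` is the set of points `x` of the `k`-medial axis of `E` with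
`|dist(x,E) - d| < δ` and `d_M(x,a) < ε`, i.e. the normalized nearest-point directions of `x`
contain a generic `k`-point subset `b` with `d_A(b,a) < ε`. -/
def MSet {n k : ℕ} (E : Set (EuclideanSpace ℝ (Fin n)))
    (a : Fin k → EuclideanSpace ℝ (Fin n)) (d ε δ : ℝ) :
    Set (EuclideanSpace ℝ (Fin n)) :=
  {x | 0 < Metric.infDist x E ∧ |Metric.infDist x E - d| < δ ∧
    ∃ (b : Fin k → EuclideanSpace ℝ (Fin n)) (σ : Equiv.Perm (Fin k)),
      (∀ i, ‖b i‖ = 1 ∧ x + (Metric.infDist x E) • b i ∈ nearestPts E x) ∧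
      AffineIndependent ℝ b ∧
      ∀ i, ‖b i - a (σ i)‖ < ε}

theorem stmt14 (n k : ℕ) (hk2 : 2 ≤ k) (hkn : k ≤ n + 1)
    (E : Set (EuclideanSpace ℝ (Fin n))) (hEne : E.Nonempty) (hEcl : IsClosed E)
    (a : Fin k → EuclideanSpace ℝ (Fin n))
    (ha : ∀ i, ‖a i‖ = 1) (hgeneric : AffineIndependent ℝ a)
    (d : ℝ) (hd : 0 < d) :
    ∃ ε > 0, ∃ δ > 0, ∃ t > 0, ∃ r > 0,
      ∀ x ∈ MSet E a d ε δ, ∀ v : EuclideanSpace ℝ (Fin n), v ≠ 0 →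
        Metric.infDist v ((vectorSpan ℝ (Set.range a) : Submodule ℝ (EuclideanSpace ℝ (Fin n))) :
          Set (EuclideanSpace ℝ (Fin n))) < r * ‖v‖ →
        ‖v‖ < t → x + v ∉ MSet E a d ε δ := by
  classical
  set i₀ : Fin k := ⟨0, by omega⟩ with hi₀
  set P : Submodule ℝ (EuclideanSpace ℝ (Fin n)) := vectorSpan ℝ (Set.range a) with hPdef
  let T : EuclideanSpace ℝ (Fin n) →ₗ[ℝ] (Fin k → ℝ) :=
    LinearMap.pi fun m => (innerSL ℝ (a m - a i₀)).toLinearMap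
  let S : P →ₗ[ℝ] (Fin k → ℝ) := T.comp P.subtype
  have hSapp : ∀ (w : P) (m : Fin k), S w m = inner ℝ (a m - a i₀) (w : EuclideanSpace ℝ (Fin n)) :=
    fun w m => rfl
  have hSker : LinearMap.ker S = ⊥ := by
    rw [LinearMap.ker_eq_bot']
    rintro ⟨w, hw⟩ hSw
    have hw0 : ∀ m : Fin k, (inner ℝ (a m - a i₀) w : ℝ) = 0 := by
      intro m
      exact (hSapp ⟨w, hw⟩ m).symm.trans (congrFun hSw m)
    have hwspan : w ∈ Submodule.span ℝ (Set.range fun i : Fin k => a i - a i₀) := by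
      have h := vectorSpan_range_eq_span_range_vsub_right ℝ a i₀
      rw [hPdef, h] at hw
      simpa using hw
    have hmem : w ∈ (ℝ ∙ w)ᗮ := by
      refine Submodule.span_le.2 ?_ hwspan
      rintro _ ⟨m, rfl⟩
      rw [SetLike.mem_coe, Submodule.mem_orthogonal_singleton_iff_inner_left]
      exact hw0 m
    have : (inner ℝ w w : ℝ) = 0 :=
      Submodule.mem_orthogonal_singleton_iff_inner_right.1 hmem
    have : w = 0 := inner_self_eq_zero.1 this
    exact Subtype.ext this
  obtain ⟨K₀, hK₀, hanti⟩ := S.exists_antilipschitzWith hSker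
  set K : ℝ := max (K₀ : ℝ) 1 with hKdef
  have hK1 : 1 ≤ K := le_max_right _ _
  have hK0 : 0 < K := lt_of_lt_of_le one_pos hK1
  have hSanti : ∀ w : P, ‖(w : EuclideanSpace ℝ (Fin n))‖ ≤ K * ‖S w‖ := by
    intro w
    have h := hanti.le_mul_dist w 0
    simp only [map_zero, dist_zero_right] at h
    have h2 : ‖w‖ ≤ (K₀ : ℝ) * ‖S w‖ := h
    have : (K₀ : ℝ) * ‖S w‖ ≤ K * ‖S w‖ :=
      mul_le_mul_of_nonneg_right (le_max_left _ _) (norm_nonneg _)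
    exact le_trans h2 this
  refine ⟨1/(36*K), by positivity, min (d/2) (d/(48*K)), lt_min (by positivity) (by positivity),
    d/(24*K), by positivity, 1/(8*K), by positivity, ?_⟩
  intro x hx v hv0 hvP hvt hx'
  have hv0' : 0 < ‖v‖ := norm_pos_iff.2 hv0
  simp only [MSet, Set.mem_setOf_eq] at hx hx'
  obtain ⟨hs0, hsd, b, σ, hb, hbind, hbe⟩ := hx
  obtain ⟨hs0', hsd', b', σ', hb', hbind', hbe'⟩ := hx'
  set s : ℝ := Metric.infDist x E with hsdef
  set s' : ℝ := Metric.infDist (x + v) E with hsdef'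
  have hδ1 : min (d/2) (d/(48*K)) ≤ d/2 := min_le_left _ _
  have hδ2 : min (d/2) (d/(48*K)) ≤ d/(48*K) := min_le_right _ _
  rw [abs_lt] at hsd hsd'
  have hslb : d/2 < s := by linarith [hsd.1]
  have hsub : s < 3*d/2 := by linarith [hsd.2]
  have hslb' : d/2 < s' := by linarith [hsd'.1]
  have hsub' : s' < 3*d/2 := by linarith [hsd'.2]
  set ε : ℝ := 1/(36*K) with hεdef
  set δ : ℝ := min (d/2) (d/(48*K)) with hδdef
  have hε0 : 0 < ε := by positivity
  have hδ0 : 0 < δ := lt_min (by positivity) (by positivity)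
  set C : ℝ := (2/d) * (d/(24*K) + 3*d*ε + 2*δ) with hCdef
  have hC0 : 0 < C := by
    apply mul_pos (by positivity)
    have : 0 < 2*δ := by linarith
    positivity
  -- key inequality
  have key : ∀ m m' : Fin k,
      (inner ℝ v (a m) : ℝ) - inner ℝ v (a m') ≤ C * ‖v‖ := by
    intro m m'
    set i := σ.symm m with hidef
    set j := σ'.symm m' with hjdef
    obtain ⟨hbn, hbE⟩ := hb i
    obtain ⟨hbn', hbE'⟩ := hb' j
    have hyE : x + s • b i ∈ E := hbE.1
    have hyE' : (x + v) + s' • b' j ∈ E := hbE'.1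
    have h1 : s' ≤ ‖v - s • b i‖ := by
      have h := Metric.infDist_le_dist_of_mem (x := x + v) hyE
      rwa [dist_eq_norm, show x + v - (x + s • b i) = v - s • b i by abel] at h
    have h2 : s ≤ ‖v + s' • b' j‖ := by
      have h := Metric.infDist_le_dist_of_mem (x := x) hyE'
      rwa [dist_eq_norm, show x - (x + v + s' • b' j) = -(v + s' • b' j) by abel,
        norm_neg] at h
    have hq1 : ‖v - s • b i‖^2 = ‖v‖^2 - 2*(s * inner ℝ v (b i)) + s^2 := by
      rw [norm_sub_sq_real, real_inner_smul_right, norm_smul, hbn]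
      rw [Real.norm_eq_abs, abs_of_pos (by linarith : (0:ℝ) < s)]
      ring
    have hq2 : ‖v + s' • b' j‖^2 = ‖v‖^2 + 2*(s' * inner ℝ v (b' j)) + s'^2 := by
      rw [norm_add_sq_real, real_inner_smul_right, norm_smul, hbn']
      rw [Real.norm_eq_abs, abs_of_pos (by linarith : (0:ℝ) < s')]
      ring
    have hsq1 : s'^2 ≤ ‖v - s • b i‖^2 := by
      apply pow_le_pow_left₀ (by linarith) h1
    have hsq2 : s^2 ≤ ‖v + s' • b' j‖^2 := by
      apply pow_le_pow_left₀ (by linarith) h2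
    have hkey0 : s * inner ℝ v (b i) ≤ s' * inner ℝ v (b' j) + ‖v‖^2 := by
      nlinarith [hsq1, hsq2, hq1, hq2]
    -- error bounds
    have hσi : σ i = m := σ.apply_symm_apply m
    have hσj : σ' j = m' := σ'.apply_symm_apply m'
    have hbm : ‖b i - a m‖ ≤ ε := by
      have := hbe i; rw [hσi] at this; linarith
    have hbm' : ‖b' j - a m'‖ ≤ ε := by
      have := hbe' j; rw [hσj] at this; linarith
    have eb1 : |(inner ℝ v (a m) : ℝ) - inner ℝ v (b i)| ≤ ε * ‖v‖ := by
      rw [← inner_sub_right]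
      calc |(inner ℝ v (a m - b i) : ℝ)| ≤ ‖v‖ * ‖a m - b i‖ := abs_real_inner_le_norm _ _
        _ ≤ ε * ‖v‖ := by
            rw [norm_sub_rev]
            calc ‖v‖ * ‖b i - a m‖ ≤ ‖v‖ * ε := by
                  exact mul_le_mul_of_nonneg_left hbm (norm_nonneg _)
              _ = ε * ‖v‖ := mul_comm _ _
    have eb2 : |(inner ℝ v (a m') : ℝ) - inner ℝ v (b' j)| ≤ ε * ‖v‖ := by
      rw [← inner_sub_right]
      calc |(inner ℝ v (a m' - b' j) : ℝ)| ≤ ‖v‖ * ‖a m' - b' j‖ := abs_real_inner_le_norm _ _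
        _ ≤ ε * ‖v‖ := by
            rw [norm_sub_rev]
            calc ‖v‖ * ‖b' j - a m'‖ ≤ ‖v‖ * ε := by
                  exact mul_le_mul_of_nonneg_left hbm' (norm_nonneg _)
              _ = ε * ‖v‖ := mul_comm _ _
    have eb3 : |(inner ℝ v (a m') : ℝ)| ≤ ‖v‖ := by
      calc |(inner ℝ v (a m') : ℝ)| ≤ ‖v‖ * ‖a m'‖ := abs_real_inner_le_norm _ _
        _ = ‖v‖ := by rw [ha m', mul_one]
    -- combine: s * (A - A') ≤ ‖v‖^2 + (s+s') ε ‖v‖ + 2 δ ‖v‖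
    have hcomb : s * ((inner ℝ v (a m) : ℝ) - inner ℝ v (a m')) ≤
        ‖v‖^2 + (s + s') * (ε * ‖v‖) + 2*δ*‖v‖ := by
      have habs1 := abs_le.1 eb1
      have habs2 := abs_le.1 eb2
      have habs3 := abs_le.1 eb3
      have habs3' : |(inner ℝ v (a m') : ℝ)| ≤ ‖v‖ := eb3
      have hss' : |s - s'| < 2*δ := by
        rw [abs_lt]; constructor <;> linarith only [hδ0, hsd.1, hsd.2, hsd'.1, hsd'.2]
      have hss'' := abs_lt.1 hss'
      have hprod : (s' - s) * (inner ℝ v (a m') : ℝ) ≤ 2*δ*‖v‖ := by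
        calc (s' - s) * (inner ℝ v (a m') : ℝ) ≤ |(s' - s) * (inner ℝ v (a m') : ℝ)| :=
              le_abs_self _
          _ = |s' - s| * |(inner ℝ v (a m') : ℝ)| := abs_mul _ _
          _ ≤ (2*δ) * ‖v‖ := by
              apply mul_le_mul _ habs3' (abs_nonneg _) (by linarith)
              rw [abs_sub_comm]; linarith
      have p1 : s * ((inner ℝ v (a m) : ℝ) - inner ℝ v (b i)) ≤ s * (ε * ‖v‖) :=
        mul_le_mul_of_nonneg_left habs1.2 (by linarith)
      have p2 : s' * ((inner ℝ v (b' j) : ℝ) - inner ℝ v (a m')) ≤ s' * (ε * ‖v‖) :=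
        mul_le_mul_of_nonneg_left (by linarith [habs2.1]) (by linarith)
      linarith only [hkey0, p1, p2, hprod]
    -- divide by s
    have hR0 : (0:ℝ) ≤ ‖v‖ + 3*d*ε + 2*δ := by positivity
    have hfin : (d/2) * ((inner ℝ v (a m) : ℝ) - inner ℝ v (a m')) ≤
        (d/(24*K) + 3*d*ε + 2*δ) * ‖v‖ := by
      rcases le_or_gt ((inner ℝ v (a m) : ℝ) - inner ℝ v (a m')) 0 with hle | hgt
      · have : (d/2) * ((inner ℝ v (a m) : ℝ) - inner ℝ v (a m')) ≤ 0 :=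
          mul_nonpos_of_nonneg_of_nonpos (by linarith) hle
        have h2 : (0:ℝ) ≤ (d/(24*K) + 3*d*ε + 2*δ) * ‖v‖ := by positivity
        linarith
      · have h3 : (d/2) * ((inner ℝ v (a m) : ℝ) - inner ℝ v (a m')) ≤
            s * ((inner ℝ v (a m) : ℝ) - inner ℝ v (a m')) :=
          mul_le_mul_of_nonneg_right (by linarith) (by linarith)
        have h4 : ‖v‖^2 + (s + s') * (ε * ‖v‖) + 2*δ*‖v‖ ≤
            (d/(24*K) + 3*d*ε + 2*δ) * ‖v‖ := by
          have hvle : ‖v‖ ≤ d/(24*K) := le_of_lt hvt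
          have h5 : ‖v‖^2 ≤ (d/(24*K)) * ‖v‖ := by
            rw [pow_two]; exact mul_le_mul_of_nonneg_right hvle (norm_nonneg v)
          have h6 : (s + s') * (ε * ‖v‖) ≤ 3*d*(ε*‖v‖) :=
            mul_le_mul_of_nonneg_right (by linarith) (by positivity)
          linarith only [h5, h6]
        linarith only [h3, h4, hcomb]
    rw [hCdef]
    have hd2 : (0:ℝ) < d/2 := by linarith
    have := mul_le_mul_of_nonneg_left hfin (le_of_lt (show (0:ℝ) < 2/d by positivity))
    calc (inner ℝ v (a m) : ℝ) - inner ℝ v (a m')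
        = (2/d) * ((d/2) * ((inner ℝ v (a m) : ℝ) - inner ℝ v (a m'))) := by
          field_simp <;> ring
      _ ≤ (2/d) * ((d/(24*K) + 3*d*ε + 2*δ) * ‖v‖) := this
      _ = (2/d) * (d/(24*K) + 3*d*ε + 2*δ) * ‖v‖ := by ring
  -- coordinate bound on v
  have key2 : ∀ m : Fin k, |(inner ℝ (a m - a i₀) v : ℝ)| ≤ C * ‖v‖ := by
    intro m
    rw [abs_le]
    constructor
    · have := key i₀ m
      rw [inner_sub_left, real_inner_comm v (a m), real_inner_comm v (a i₀)]
      linarith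
    · have := key m i₀
      rw [inner_sub_left, real_inner_comm v (a m), real_inner_comm v (a i₀)]
      linarith
  -- nearest point in P
  have hPne : (P : Set (EuclideanSpace ℝ (Fin n))).Nonempty := ⟨0, Submodule.zero_mem P⟩
  obtain ⟨w, hwP, hwd⟩ := (Metric.infDist_lt_iff hPne).1 hvP
  rw [dist_eq_norm] at hwd
  set r : ℝ := 1/(8*K) with hrdef
  have hr0 : 0 < r := by positivity
  -- coordinate bound on w
  have keyw : ∀ m : Fin k, |(inner ℝ (a m - a i₀) w : ℝ)| ≤ (C + 2*r) * ‖v‖ := by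
    intro m
    have hsplit : (inner ℝ (a m - a i₀) w : ℝ) =
        inner ℝ (a m - a i₀) v + inner ℝ (a m - a i₀) (w - v) := by
      rw [← inner_add_right]; congr 1; abel
    have hna : ‖a m - a i₀‖ ≤ 2 := by
      calc ‖a m - a i₀‖ ≤ ‖a m‖ + ‖a i₀‖ := norm_sub_le _ _
        _ = 2 := by rw [ha m, ha i₀]; norm_num
    have h2 : |(inner ℝ (a m - a i₀) (w - v) : ℝ)| ≤ 2 * (r * ‖v‖) := by
      calc |(inner ℝ (a m - a i₀) (w - v) : ℝ)| ≤ ‖a m - a i₀‖ * ‖w - v‖ :=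
            abs_real_inner_le_norm _ _
        _ ≤ 2 * (r * ‖v‖) := by
            apply mul_le_mul hna _ (norm_nonneg _) (by norm_num)
            rw [norm_sub_rev]; linarith
    calc |(inner ℝ (a m - a i₀) w : ℝ)| ≤
        |(inner ℝ (a m - a i₀) v : ℝ)| + |(inner ℝ (a m - a i₀) (w - v) : ℝ)| := by
          rw [hsplit]; exact abs_add_le _ _
      _ ≤ C * ‖v‖ + 2 * (r * ‖v‖) := add_le_add (key2 m) h2
      _ = (C + 2*r) * ‖v‖ := by ring
  -- norm bound via antilipschitz
  set wS : P := ⟨w, hwP⟩ with hwSdef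
  have hSn : ‖S wS‖ ≤ (C + 2*r) * ‖v‖ := by
    rw [pi_norm_le_iff_of_nonneg (by positivity)]
    intro m
    rw [hSapp wS m, Real.norm_eq_abs]
    exact keyw m
  have hwle : ‖w‖ ≤ K * ((C + 2*r) * ‖v‖) := by
    calc ‖w‖ = ‖(wS : EuclideanSpace ℝ (Fin n))‖ := rfl
      _ ≤ K * ‖S wS‖ := hSanti wS
      _ ≤ K * ((C + 2*r) * ‖v‖) := mul_le_mul_of_nonneg_left hSn (le_of_lt hK0)
  have hwge : (1 - r) * ‖v‖ < ‖w‖ := by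
    have : ‖v‖ ≤ ‖v - w‖ + ‖w‖ := by
      calc ‖v‖ = ‖(v - w) + w‖ := by congr 1; abel
        _ ≤ ‖v - w‖ + ‖w‖ := norm_add_le _ _
    linarith only [hwd, this]
  -- final arithmetic
  have hKC : K * C ≤ 1/3 := by
    rw [hCdef, hεdef]
    have hδle : δ ≤ d/(48*K) := hδ2
    have hKne : K ≠ 0 := ne_of_gt hK0
    have hdne : d ≠ 0 := ne_of_gt hd
    have h1 : K * ((2/d) * (d/(24*K) + 3*d*(1/(36*K)) + 2*δ)) ≤
        K * ((2/d) * (d/(24*K) + 3*d*(1/(36*K)) + 2*(d/(48*K)))) := by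
      apply mul_le_mul_of_nonneg_left _ (le_of_lt hK0)
      apply mul_le_mul_of_nonneg_left _ (by positivity)
      linarith
    have h2 : K * ((2/d) * (d/(24*K) + 3*d*(1/(36*K)) + 2*(d/(48*K)))) = 1/3 := by
      field_simp
      ring
    linarith
  have hKr : K * (2*r) = 1/4 := by
    rw [hrdef]; field_simp; ring
  have hr8 : r ≤ 1/8 := by
    rw [hrdef]
    rw [div_le_div_iff₀ (by positivity) (by norm_num)]
    linarith
  have hfinal : ‖w‖ ≤ (7/12) * ‖v‖ := by
    have : K * ((C + 2*r) * ‖v‖) = (K*C + K*(2*r)) * ‖v‖ := by ring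
    rw [this, hKr] at hwle
    have h7 : (K*C + 1/4) * ‖v‖ ≤ (7/12) * ‖v‖ :=
      mul_le_mul_of_nonneg_right (by linarith only [hKC]) (norm_nonneg v)
    linarith only [hwle, h7]
  have h8 : r * ‖v‖ ≤ (1/8) * ‖v‖ := mul_le_mul_of_nonneg_right hr8 (norm_nonneg v)
  linarith only [hwge, hfinal, h8, hv0']
end

section
/- Let E ⊂ ℝ^n be nonempty closed, 2 ≤ k ≤ n+1, a ⊂ S^{n−1} a k-point set in generic position and d > 0. Then there exist ε_{a,d}, δ_{a,d} > 0 such that for all 0 < ε ≤ ε_{a,d} and 0 < δ ≤ δ_{a,d}, the set M(a,d,ε,δ) is (n−k+1)-rectifiable with locally finite (n−k+1)-dimensional Hausdorff measure. -/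
open MeasureTheory

section Aux

open Metric Set Module
open scoped RealInnerProductSpace
set_option synthInstance.maxHeartbeats 1000000
set_option maxHeartbeats 1000000


lemma euclid_norm_le_of_abs_le {k : ℕ} (x : EuclideanSpace ℝ (Fin k)) (M : ℝ) (hM : 0 ≤ M)
    (h : ∀ i, |x i| ≤ M) : ‖x‖ ≤ Real.sqrt k * M := by
  rw [EuclideanSpace.norm_eq]
  have : ∑ i : Fin k, ‖x i‖ ^ 2 ≤ ∑ _i : Fin k, M ^ 2 := by
    apply Finset.sum_le_sum
    intro i _
    have := h i
    have : ‖x i‖ ≤ M := by rwa [Real.norm_eq_abs]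
    nlinarith [norm_nonneg (x i)]
  calc Real.sqrt (∑ i : Fin k, ‖x i‖ ^ 2) ≤ Real.sqrt (∑ _i : Fin k, M ^ 2) :=
        Real.sqrt_le_sqrt this
    _ = Real.sqrt (k * M ^ 2) := by rw [Finset.sum_const, Finset.card_univ, Fintype.card_fin,
        nsmul_eq_mul]
    _ = Real.sqrt k * M := by
        rw [Real.sqrt_mul (by positivity), Real.sqrt_sq hM]

lemma aux_proj_bound {n k : ℕ} (u : Fin k → EuclideanSpace ℝ (Fin n)) :
    ∃ C : ℝ, 0 < C ∧ ∀ (v : EuclideanSpace ℝ (Fin n)) (M : ℝ), 0 ≤ M →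
      (∀ i, |⟪u i, v⟫| ≤ M) →
      ‖(Submodule.orthogonalProjection (Submodule.span ℝ (Set.range u)) v :
          EuclideanSpace ℝ (Fin n))‖ ≤ C * M := by
  set P := Submodule.span ℝ (Set.range u) with hP
  -- the linear map v ↦ (⟪u i, v⟫)ᵢ
  let T : EuclideanSpace ℝ (Fin n) →ₗ[ℝ] EuclideanSpace ℝ (Fin k) :=
    { toFun := fun v => WithLp.toLp 2 (fun i => ⟪u i, v⟫)
      map_add' := by intro v w; ext i; simp [inner_add_right]
      map_smul' := by intro c v; ext i; simp [inner_smul_right]}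
  let Tp := T.domRestrict P
  have hinj : Function.Injective Tp := by
    rw [← LinearMap.ker_eq_bot, Submodule.eq_bot_iff]
    rintro ⟨v, hv⟩ hker
    rw [LinearMap.mem_ker] at hker
    have h0 : ∀ i, ⟪u i, v⟫ = 0 := by
      intro i
      have : Tp ⟨v, hv⟩ i = (0 : EuclideanSpace ℝ (Fin k)) i := by rw [hker]
      simpa [Tp, T] using this
    have hvo : v ∈ Pᗮ := by
      rw [Submodule.mem_orthogonal]
      intro w hw
      induction hw using Submodule.span_induction with
      | mem x hx => obtain ⟨i, rfl⟩ := hx; exact h0 i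
      | zero => simp
      | add x y _ _ hx hy => rw [inner_add_left, hx, hy, add_zero]
      | smul c x _ hx => rw [inner_smul_left, hx, mul_zero]
    have : v ∈ P ⊓ Pᗮ := ⟨hv, hvo⟩
    rw [Submodule.inf_orthogonal_eq_bot] at this
    simpa using this
  let e : P ≃ₗ[ℝ] LinearMap.range Tp := LinearEquiv.ofInjective Tp hinj
  let ce := e.toContinuousLinearEquiv
  set C0 : ℝ := ‖(ce.symm : LinearMap.range Tp →L[ℝ] P)‖ with hC0
  refine ⟨(C0 + 1) * (Real.sqrt k + 1), by positivity, ?_⟩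
  intro v M hM hble
  set p := Submodule.orthogonalProjection P v with hp
  have hmemP : (p : EuclideanSpace ℝ (Fin n)) ∈ P := p.2
  have hinner : ∀ i, ⟪u i, (p : EuclideanSpace ℝ (Fin n))⟫ = ⟪u i, v⟫ := by
    intro i
    have hui : u i ∈ P := Submodule.subset_span ⟨i, rfl⟩
    have hperp : v - (p : EuclideanSpace ℝ (Fin n)) ∈ Pᗮ :=
      Submodule.sub_starProjection_mem_orthogonal v
    have := hperp _ hui
    rw [inner_sub_right] at this
    linarith
  have hTpnorm : ‖Tp p‖ ≤ Real.sqrt k * M := by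
    apply euclid_norm_le_of_abs_le _ _ hM
    intro i
    show |⟪u i, (p : EuclideanSpace ℝ (Fin n))⟫| ≤ M
    rw [hinner i]; exact hble i
  have key : ‖(p : EuclideanSpace ℝ (Fin n))‖ ≤ C0 * ‖Tp p‖ := by
    have h1 : p = ce.symm (ce p) := by simp
    have : ‖(p : P)‖ ≤ C0 * ‖ce p‖ := by
      conv_lhs => rw [h1]
      exact (ce.symm : LinearMap.range Tp →L[ℝ] P).le_opNorm (ce p)
    have hcep : ‖ce p‖ = ‖Tp p‖ := rfl
    rwa [hcep] at this
  calc ‖(p : EuclideanSpace ℝ (Fin n))‖ ≤ C0 * (Real.sqrt k * M) := by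
        refine key.trans ?_
        have : (0:ℝ) ≤ C0 := hC0 ▸ ContinuousLinearMap.opNorm_nonneg _
        nlinarith
    _ ≤ (C0 + 1) * (Real.sqrt k + 1) * M := by
        have h0 : (0:ℝ) ≤ C0 := hC0 ▸ ContinuousLinearMap.opNorm_nonneg _
        have h1 : (0:ℝ) ≤ Real.sqrt k := Real.sqrt_nonneg _
        nlinarith




lemma aux_inner_le {n k : ℕ} {E : Set (EuclideanSpace ℝ (Fin n))}
    {a : Fin k → EuclideanSpace ℝ (Fin n)} {d ε δ : ℝ}
    {x x' : EuclideanSpace ℝ (Fin n)} (hx : x ∈ MSet E a d ε δ) (hx' : x' ∈ MSet E a d ε δ)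
    (j : Fin k) :
    ⟪x' - x, a j⟫ ≤ (‖x' - x‖^2 + (Metric.infDist x E)^2 - (Metric.infDist x' E)^2) /
      (2 * Metric.infDist x E) + ε * ‖x' - x‖ := by
  obtain ⟨hr0, hrd, b, σ, hb, hbind, hba⟩ := hx
  set r := Metric.infDist x E with hr
  set r' := Metric.infDist x' E with hr'
  set v := x' - x with hv
  set i := σ.symm j with hi
  have hbi : ‖b i‖ = 1 := (hb i).1
  have hyE : x + r • b i ∈ E := (hb i).2.1
  have hr'le : r' ≤ dist x' (x + r • b i) := Metric.infDist_le_dist_of_mem hyE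
  have hr'0 : 0 ≤ r' := Metric.infDist_nonneg
  have hdist : dist x' (x + r • b i) = ‖v - r • b i‖ := by
    rw [dist_eq_norm, hv]
    congr 1
    module
  have hsq : r'^2 ≤ ‖v‖^2 - 2 * r * ⟪v, b i⟫ + r^2 := by
    have h1 : r'^2 ≤ ‖v - r • b i‖^2 := by
      rw [← hdist]
      have := dist_nonneg (x := x') (y := x + r • b i)
      nlinarith
    have h2 : ‖v - r • b i‖^2 = ‖v‖^2 - 2 * r * ⟪v, b i⟫ + r^2 := by
      rw [norm_sub_sq_real, real_inner_smul_right, norm_smul, Real.norm_eq_abs,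
        abs_of_pos hr0, hbi]
      ring
    linarith
  have hinnerb : ⟪v, b i⟫ ≤ (‖v‖^2 + r^2 - r'^2) / (2 * r) := by
    rw [le_div_iff₀ (by positivity)]
    nlinarith
  have hba' : ‖b i - a j‖ ≤ ε := by
    have := hba i
    rw [hi, Equiv.apply_symm_apply] at this
    exact this.le
  have hcs : ⟪v, a j - b i⟫ ≤ ε * ‖v‖ := by
    calc ⟪v, a j - b i⟫ ≤ ‖v‖ * ‖a j - b i‖ := real_inner_le_norm _ _
      _ ≤ ‖v‖ * ε := by
          have : ‖a j - b i‖ ≤ ε := by rwa [norm_sub_rev]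
          nlinarith [norm_nonneg v]
      _ = ε * ‖v‖ := mul_comm _ _
  have : ⟪v, a j⟫ = ⟪v, b i⟫ + ⟪v, a j - b i⟫ := by
    rw [inner_sub_right]; ring
  linarith

lemma aux_pair {n k : ℕ} {E : Set (EuclideanSpace ℝ (Fin n))}
    {a : Fin k → EuclideanSpace ℝ (Fin n)} {d ε δ : ℝ} (hd : 0 < d) (hδ : δ ≤ d / 2)
    {x x' : EuclideanSpace ℝ (Fin n)} (hx : x ∈ MSet E a d ε δ) (hx' : x' ∈ MSet E a d ε δ)
    (i j : Fin k) :
    ⟪x' - x, a i - a j⟫ ≤ 2 * ‖x' - x‖^2 / d + 2 * ε * ‖x' - x‖ := by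
  set r := Metric.infDist x E with hr
  set r' := Metric.infDist x' E with hr'
  have hrlb : d / 2 < r := by
    have := hx.2.1
    rw [abs_lt] at this
    linarith
  have hr'lb : d / 2 < r' := by
    have := hx'.2.1
    rw [abs_lt] at this
    linarith
  have h1 := aux_inner_le hx hx' i
  have h2 := aux_inner_le hx' hx j
  have hveq : x - x' = -(x' - x) := by abel
  have h2' : -⟪x' - x, a j⟫ ≤ (‖x' - x‖^2 + r'^2 - r^2) / (2 * r') + ε * ‖x' - x‖ := by
    rw [hveq, norm_neg] at h2
    rw [← inner_neg_left]
    convert h2 using 3 <;> simp [norm_neg]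
  have hsplit : ⟪x' - x, a i - a j⟫ = ⟪x' - x, a i⟫ + (-⟪x' - x, a j⟫) := by
    rw [inner_sub_right]; ring
  set V := ‖x' - x‖ with hV
  have hr0 : 0 < r := by linarith
  have hr'0 : 0 < r' := by linarith
  -- middle term nonpositive
  have hmid : (r^2 - r'^2) / (2 * r) + (r'^2 - r^2) / (2 * r') ≤ 0 := by
    have heq : (r^2 - r'^2) / (2 * r) + (r'^2 - r^2) / (2 * r') =
        -((r + r') * (r - r')^2 / (2 * r * r')) := by
      field_simp
      ring
    rw [heq]
    have : 0 ≤ (r + r') * (r - r')^2 / (2 * r * r') := by positivity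
    linarith
  have hV0 : 0 ≤ V := norm_nonneg _
  have hVr : V^2 / (2 * r) ≤ V^2 / d := by
    apply div_le_div_of_nonneg_left (by positivity) hd
    linarith
  have hVr' : V^2 / (2 * r') ≤ V^2 / d := by
    apply div_le_div_of_nonneg_left (by positivity) hd
    linarith
  have hsplit1 : (V^2 + r^2 - r'^2) / (2 * r) = V^2 / (2*r) + (r^2 - r'^2) / (2*r) := by ring
  have hsplit2 : (V^2 + r'^2 - r^2) / (2 * r') = V^2 / (2*r') + (r'^2 - r^2) / (2*r') := by ring
  rw [hsplit]
  have : 2 * V^2 / d = V^2 / d + V^2 / d := by ring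
  rw [this]
  linarith


lemma aux_finrank {n k : ℕ} (hk2 : 2 ≤ k) (hkn : k ≤ n + 1)
    {a : Fin k → EuclideanSpace ℝ (Fin n)} (hgen : AffineIndependent ℝ a) (j0 : Fin k) :
    finrank ℝ
      ((Submodule.span ℝ (Set.range (fun i => a i - a j0)))ᗮ :
        Submodule ℝ (EuclideanSpace ℝ (Fin n))) = n + 1 - k := by
  have hli : LinearIndependent ℝ (fun i : {x : Fin k // x ≠ j0} => a (i : Fin k) - a j0) := by
    have := (affineIndependent_iff_linearIndependent_vsub ℝ a j0).mp hgen
    simpa [vsub_eq_sub] using this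
  have hspan : Submodule.span ℝ (Set.range (fun i => a i - a j0)) =
      Submodule.span ℝ (Set.range (fun i : {x : Fin k // x ≠ j0} => a (i : Fin k) - a j0)) := by
    apply le_antisymm
    · rw [Submodule.span_le]
      rintro _ ⟨i, rfl⟩
      by_cases h : i = j0
      · subst h; simp
      · exact Submodule.subset_span ⟨⟨i, h⟩, rfl⟩
    · apply Submodule.span_mono
      rintro _ ⟨i, rfl⟩
      exact ⟨i, rfl⟩
  have hcard : Fintype.card {x : Fin k // x ≠ j0} = k - 1 := by
    simp [Fintype.card_subtype_compl]
  have hP : finrank ℝ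
      (Submodule.span ℝ (Set.range (fun i => a i - a j0)) :
        Submodule ℝ (EuclideanSpace ℝ (Fin n))) = k - 1 := by
    rw [hspan, finrank_span_eq_card hli, hcard]
  have hsum := Submodule.finrank_add_finrank_orthogonal
    (𝕜 := ℝ) (Submodule.span ℝ (Set.range (fun i => a i - a j0)))
  rw [hP, finrank_euclideanSpace_fin] at hsum
  omega

lemma aux_graph {n m : ℕ} (Q : Submodule ℝ (EuclideanSpace ℝ (Fin n)))
    (hQ : finrank ℝ Q = m) (S : Set (EuclideanSpace ℝ (Fin n)))
    (hcone : ∀ x ∈ S, ∀ x' ∈ S,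
      ‖x' - x‖ ≤ 2 * ‖(Submodule.orthogonalProjection Q (x' - x) : EuclideanSpace ℝ (Fin n))‖)
    (R : ℝ) (hSR : ∀ x ∈ S, ‖x‖ ≤ R) :
    ∃ (f : EuclideanSpace ℝ (Fin m) → EuclideanSpace ℝ (Fin n)) (K : NNReal),
      LipschitzWith K f ∧ S ⊆ f '' Metric.closedBall 0 R := by
  classical
  set π : EuclideanSpace ℝ (Fin n) → Q := fun x => Submodule.orthogonalProjection Q x with hπ
  have hπsub : ∀ x x', π x' - π x = Submodule.orthogonalProjection Q (x' - x) := by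
    intro x x'; simp [hπ, map_sub]
  have hinjOn : Set.InjOn π S := by
    intro x hx x' hx' h
    have h2 := hcone x hx x' hx'
    have : π x' - π x = 0 := by rw [h]; abel
    rw [hπsub] at this
    have hz : ‖(Submodule.orthogonalProjection Q (x' - x) : EuclideanSpace ℝ (Fin n))‖ = 0 := by
      rw [this]; simp
    have hxx : ‖x' - x‖ ≤ 0 := by rw [hz] at h2; linarith
    have hsub : x' - x = 0 := by
      have h0 := norm_nonneg (x' - x)
      exact norm_eq_zero.mp (le_antisymm hxx h0)
    exact (sub_eq_zero.mp hsub).symm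
  set g : Q → EuclideanSpace ℝ (Fin n) := Function.invFunOn π S with hg
  have hleft : ∀ x ∈ S, g (π x) = x := fun x hx => hinjOn.leftInvOn_invFunOn hx
  set g' : Q → (Fin n → ℝ) := fun q => (WithLp.equiv 2 (Fin n → ℝ)) (g q) with hg'
  have hdistS : ∀ x ∈ S, ∀ x' ∈ S, dist x x' ≤ 2 * dist (π x) (π x') := by
    intro x hx x' hx'
    have h2 := hcone x' hx' x hx
    rw [dist_eq_norm, Subtype.dist_eq, dist_eq_norm]
    have hco : ((π x : EuclideanSpace ℝ (Fin n))) - (π x' : EuclideanSpace ℝ (Fin n)) =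
        ((π x - π x' : Q) : EuclideanSpace ℝ (Fin n)) := by push_cast; ring
    rw [hco, hπsub x' x]
    exact h2
  have hLipOn : LipschitzOnWith 2 g' (π '' S) := by
    rw [lipschitzOnWith_iff_dist_le_mul]
    rintro _ ⟨x, hx, rfl⟩ _ ⟨x', hx', rfl⟩
    calc dist (g' (π x)) (g' (π x')) ≤ dist (g (π x)) (g (π x')) := by
          apply (PiLp.lipschitzWith_ofLp 2 (fun _ : Fin n => ℝ)).dist_le_mul _ _ |>.trans
          simp
      _ = dist x x' := by rw [hleft x hx, hleft x' hx']
      _ ≤ 2 * dist (π x) (π x') := hdistS x hx x' hx'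
  obtain ⟨G, hGlip, hGeq⟩ := hLipOn.extend_pi
  have hψ := (PiLp.antilipschitzWith_ofLp 2 (fun _ : Fin n => ℝ)).to_rightInverse
    (fun y => (WithLp.equiv 2 (Fin n → ℝ)).apply_symm_apply y)
  have hfin : finrank ℝ Q = m := hQ
  let ob : OrthonormalBasis (Fin m) ℝ Q :=
    (stdOrthonormalBasis ℝ Q).reindex (finCongr hfin)
  set e : EuclideanSpace ℝ (Fin m) ≃ₗᵢ[ℝ] Q := ob.repr.symm with he
  refine ⟨fun p => (WithLp.equiv 2 (Fin n → ℝ)).symm (G (e p)), _,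
    (hψ.comp hGlip).comp e.lipschitz, ?_⟩
  · intro x hx
    refine ⟨e.symm (π x), ?_, ?_⟩
    · rw [mem_closedBall_zero_iff]
      have h1 : ‖e.symm (π x)‖ = ‖π x‖ := e.symm.norm_map _
      have h2 : ‖π x‖ ≤ ‖x‖ := by
        have := (Submodule.orthogonalProjection Q).le_opNorm x
        have hb := Submodule.orthogonalProjection_norm_le Q
        calc ‖π x‖ = ‖Submodule.orthogonalProjection Q x‖ := rfl
          _ ≤ ‖Submodule.orthogonalProjection Q‖ * ‖x‖ := (Submodule.orthogonalProjection Q).le_opNorm x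
          _ ≤ 1 * ‖x‖ := by nlinarith [norm_nonneg x]
          _ = ‖x‖ := one_mul _
      rw [h1]
      exact h2.trans (hSR x hx)
    · show (WithLp.equiv 2 (Fin n → ℝ)).symm (G (e (e.symm (π x)))) = x
      rw [e.apply_symm_apply]
      have hmem : π x ∈ π '' S := ⟨x, hx, rfl⟩
      rw [← hGeq hmem]
      show (WithLp.equiv 2 (Fin n → ℝ)).symm ((WithLp.equiv 2 (Fin n → ℝ)) (g (π x))) = x
      rw [Equiv.symm_apply_apply, hleft x hx]


lemma aux_ball_finite (m : ℕ) (R : ℝ) :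
    μH[(m : ℝ)] (Metric.closedBall (0 : EuclideanSpace ℝ (Fin m)) R) < ⊤ := by
  have h := isAddHaarMeasure_hausdorffMeasure (E := EuclideanSpace ℝ (Fin m))
  rw [finrank_euclideanSpace_fin] at h
  haveI := h
  exact (isCompact_closedBall _ _).measure_lt_top


lemma aux_cone {n k : ℕ} {E : Set (EuclideanSpace ℝ (Fin n))}
    {a : Fin k → EuclideanSpace ℝ (Fin n)} {d ε δ : ℝ} (hd : 0 < d) (hδle : δ ≤ d / 2)
    (j0 : Fin k) {C : ℝ} (hC : 0 < C)
    (hCbound : ∀ (v : EuclideanSpace ℝ (Fin n)) (M : ℝ), 0 ≤ M →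
      (∀ i, |⟪a i - a j0, v⟫| ≤ M) →
      ‖(Submodule.orthogonalProjection (Submodule.span ℝ (Set.range (fun i => a i - a j0))) v :
        EuclideanSpace ℝ (Fin n))‖ ≤ C * M)
    (hε : 0 < ε) (hεle : ε ≤ 1 / (16 * C))
    {x x' : EuclideanSpace ℝ (Fin n)} (hx : x ∈ MSet E a d ε δ) (hx' : x' ∈ MSet E a d ε δ)
    (hlt : ‖x' - x‖ ≤ d / (16 * C)) :
    ‖x' - x‖ ≤ 2 * ‖(Submodule.orthogonalProjection
      (Submodule.span ℝ (Set.range (fun i => a i - a j0)))ᗮ (x' - x) :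
      EuclideanSpace ℝ (Fin n))‖ := by
  have h1 : ∀ i : Fin k, ⟪a i - a j0, x' - x⟫ ≤ 2 * ‖x' - x‖^2 / d + 2 * ε * ‖x' - x‖ := by
    intro i
    have h := aux_pair hd hδle hx hx' i j0
    calc ⟪a i - a j0, x' - x⟫ = ⟪x' - x, a i - a j0⟫ := real_inner_comm _ _
      _ ≤ _ := h
  have h2 : ∀ i : Fin k, -(2 * ‖x' - x‖^2 / d + 2 * ε * ‖x' - x‖) ≤ ⟪a i - a j0, x' - x⟫ := by
    intro i
    have h := aux_pair hd hδle hx' hx i j0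
    have hneg : x - x' = -(x' - x) := by abel
    rw [hneg, norm_neg] at h
    have heq : ⟪-(x' - x), a i - a j0⟫ = -⟪a i - a j0, x' - x⟫ := by
      rw [inner_neg_left, real_inner_comm]
    rw [heq] at h
    linarith
  have hbound : ∀ i, |⟪a i - a j0, x' - x⟫| ≤ 2 * ‖x' - x‖^2 / d + 2 * ε * ‖x' - x‖ := by
    intro i; rw [abs_le]; exact ⟨h2 i, h1 i⟩
  have hM0 : 0 ≤ 2 * ‖x' - x‖^2 / d + 2 * ε * ‖x' - x‖ := by positivity
  have hproj := hCbound (x' - x) _ hM0 hbound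
  have hε16 : C * ε ≤ 1 / 16 := by
    calc C * ε ≤ C * (1 / (16 * C)) := mul_le_mul_of_nonneg_left hεle hC.le
      _ = 1 / 16 := by field_simp
  have h16 : ‖x' - x‖ * (16 * C) ≤ d := by
    rw [← le_div_iff₀ (by positivity)]
    exact hlt
  have e1 : 2 * ‖x' - x‖^2 / d ≤ ‖x' - x‖ / (8 * C) := by
    rw [div_le_div_iff₀ hd (by positivity)]
    nlinarith [mul_le_mul_of_nonneg_left h16 (norm_nonneg (x' - x))]
  have e2 : 2 * ε * ‖x' - x‖ ≤ ‖x' - x‖ / (8 * C) := by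
    rw [le_div_iff₀ (by positivity)]
    nlinarith [mul_le_mul_of_nonneg_right hε16 (norm_nonneg (x' - x))]
  have e3 : C * (‖x' - x‖ / (8 * C) + ‖x' - x‖ / (8 * C)) = ‖x' - x‖ / 4 := by
    field_simp
    ring
  have hCM : C * (2 * ‖x' - x‖^2 / d + 2 * ε * ‖x' - x‖) ≤ ‖x' - x‖ / 2 := by
    calc C * (2 * ‖x' - x‖^2 / d + 2 * ε * ‖x' - x‖)
        ≤ C * (‖x' - x‖ / (8 * C) + ‖x' - x‖ / (8 * C)) := by
          apply mul_le_mul_of_nonneg_left (by linarith) hC.le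
      _ = ‖x' - x‖ / 4 := e3
      _ ≤ ‖x' - x‖ / 2 := by linarith [norm_nonneg (x' - x)]
  have hdecomp := Submodule.starProjection_add_starProjection_orthogonal
    (K := Submodule.span ℝ (Set.range (fun i => a i - a j0))) (x' - x)
  have htri : ‖x' - x‖ ≤
      ‖(Submodule.orthogonalProjection (Submodule.span ℝ (Set.range (fun i => a i - a j0))) (x' - x) :
        EuclideanSpace ℝ (Fin n))‖ +
      ‖(Submodule.orthogonalProjection (Submodule.span ℝ (Set.range (fun i => a i - a j0)))ᗮ (x' - x) :
        EuclideanSpace ℝ (Fin n))‖ := by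
    calc ‖x' - x‖ = ‖(Submodule.orthogonalProjection (Submodule.span ℝ (Set.range (fun i => a i - a j0)))
          (x' - x) : EuclideanSpace ℝ (Fin n)) +
          (Submodule.orthogonalProjection (Submodule.span ℝ (Set.range (fun i => a i - a j0)))ᗮ (x' - x) :
          EuclideanSpace ℝ (Fin n))‖ := congrArg norm hdecomp.symm
      _ ≤ _ := norm_add_le _ _
  linarith

theorem stmt15 (n k : ℕ) (hk2 : 2 ≤ k) (hkn : k ≤ n + 1)
    (E : Set (EuclideanSpace ℝ (Fin n))) (hEne : E.Nonempty) (hEcl : IsClosed E)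
    (a : Fin k → EuclideanSpace ℝ (Fin n))
    (ha : ∀ i, ‖a i‖ = 1) (hgeneric : AffineIndependent ℝ a)
    (d : ℝ) (hd : 0 < d) :
    ∃ εad > 0, ∃ δad > 0, ∀ ε δ : ℝ, 0 < ε → ε ≤ εad → 0 < δ → δ ≤ δad →
      CountablyRectifiable (n + 1 - k) (MSet E a d ε δ) ∧
      ∀ x : EuclideanSpace ℝ (Fin n), ∃ t > 0,
        μH[(n + 1 - k : ℕ)] (MSet E a d ε δ ∩ Metric.ball x t) < ⊤ := by
  classical
  have hk0 : 0 < k := by omega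
  let j0 : Fin k := ⟨0, hk0⟩
  obtain ⟨C, hC, hCbound⟩ := aux_proj_bound (fun i => a i - a j0)
  have hfrk : finrank ℝ
      ((Submodule.span ℝ (Set.range (fun i => a i - a j0)))ᗮ :
        Submodule ℝ (EuclideanSpace ℝ (Fin n))) = n + 1 - k :=
    aux_finrank hk2 hkn hgeneric j0
  have hρpos : 0 < d / (16 * C) := by positivity
  refine ⟨1 / (16 * C), by positivity, d / 2, by positivity, ?_⟩
  intro ε δ hε hεle hδ hδle
  -- local Lipschitz parametrization
  have hloc : ∀ z : EuclideanSpace ℝ (Fin n),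
      ∃ (f : EuclideanSpace ℝ (Fin (n + 1 - k)) → EuclideanSpace ℝ (Fin n)) (K : NNReal),
        LipschitzWith K f ∧
          MSet E a d ε δ ∩ ball z (d / (16 * C) / 2) ⊆
            f '' closedBall 0 (‖z‖ + d / (16 * C)) := by
    intro z
    apply aux_graph _ hfrk
    · rintro x ⟨hx, hxb⟩ x' ⟨hx', hxb'⟩
      apply aux_cone hd hδle j0 hC hCbound hε hεle hx hx'
      have htri : dist x' x ≤ dist x' z + dist z x := dist_triangle _ _ _
      rw [mem_ball] at hxb hxb'
      rw [← dist_eq_norm]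
      rw [dist_comm z x] at htri
      linarith
    · rintro x ⟨hx, hxb⟩
      rw [mem_ball, dist_eq_norm] at hxb
      calc ‖x‖ = ‖z + (x - z)‖ := by congr 1; abel
        _ ≤ ‖z‖ + ‖x - z‖ := norm_add_le _ _
        _ ≤ ‖z‖ + d / (16 * C) := by linarith
  constructor
  · -- countable rectifiability
    obtain ⟨D, hDc, hDd⟩ := TopologicalSpace.exists_countable_dense (EuclideanSpace ℝ (Fin n))
    have hDne : D.Nonempty := hDd.nonempty
    obtain ⟨z, hz⟩ := hDc.exists_eq_range hDne
    choose f K hf hsub using fun i => hloc (z i)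
    refine ⟨f, K, hf, ?_⟩
    have hcov : MSet E a d ε δ \ ⋃ i, Set.range (f i) = ∅ := by
      rw [Set.diff_eq_empty]
      intro x hx
      obtain ⟨y, hyD, hyb⟩ := hDd.exists_mem_open isOpen_ball
        (Metric.nonempty_ball.mpr (by positivity : (0:ℝ) < d / (16 * C) / 2) :
          (ball x (d / (16 * C) / 2)).Nonempty)
      rw [hz] at hyD
      obtain ⟨i, rfl⟩ := hyD
      have hxball : x ∈ ball (z i) (d / (16 * C) / 2) := by
        rw [mem_ball, dist_comm]
        exact mem_ball.mp hyb
      have hmem := hsub i ⟨hx, hxball⟩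
      exact Set.mem_iUnion.mpr ⟨i, Set.image_subset_range _ _ hmem⟩
    rw [hcov]
    simp
  · -- local finiteness
    intro x
    refine ⟨d / (16 * C) / 2, by positivity, ?_⟩
    obtain ⟨f, K, hf, hsub⟩ := hloc x
    calc μH[(n + 1 - k : ℕ)] (MSet E a d ε δ ∩ ball x (d / (16 * C) / 2))
        ≤ μH[(n + 1 - k : ℕ)] (f '' closedBall 0 (‖x‖ + d / (16 * C))) := measure_mono hsub
      _ ≤ (K : ENNReal) ^ ((n + 1 - k : ℕ) : ℝ) *
          μH[(n + 1 - k : ℕ)] (closedBall (0 : EuclideanSpace ℝ (Fin (n + 1 - k)))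
            (‖x‖ + d / (16 * C))) :=
          hf.hausdorffMeasure_image_le (by positivity) _
      _ < ⊤ := ENNReal.mul_lt_top
          (ENNReal.rpow_lt_top_of_nonneg (by positivity) ENNReal.coe_ne_top)
          (aux_ball_finite (n + 1 - k) (‖x‖ + d / (16 * C)))

end Aux
end
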